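/- arXiv:1512.00494 — 5 statements merged into one kernel-verified Lean document; each statement's English description precedes it below -/
import Mathlib

section
/- Let n₁,…,n_r ≥ 1 be integers with n = n₁+⋯+n_r, and let π be a non-crossing partition of [n] without singleton blocks that respects the interval partition n₁⊗⋯⊗n_r with blocks B₁,…,B_r. Let I₁,…,I_m ⊆ {1,…,r} be the vertex sets of the connected components of the graph C_π on vertices {B₁,…,B_r} having an edge between B_i and B_j whenever some block of π meets both. For q = 1,…,m, let π_q be the restriction of π to ∪_{j ∈ I_q} B_j, relabeled as a partition of [Σ_{j ∈ I_q} n_j]; then each π_q is a non-crossing partition without singletons that respects and connects the interval partition ⊗_{j ∈ I_q} n_j, and for all bounded measurable functions f_j : ℝ₊^{n_j} → ℂ with bounded support (j = 1,…,r), the partition integral factorizes: ∫_π f₁ ⊗ ⋯ ⊗ f_r = Π_{q=1}^{m} ∫_{π_q} ⊗_{j ∈ I_q} f_j. -/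
open MeasureTheory Filter Finset Topology
open scoped ENNReal

noncomputable section

/-- The index set of the tensor space `ℝ₊^{n 0} ⊗ ⋯ ⊗ ℝ₊^{n (r-1)}`:
positions grouped into `r` consecutive interval blocks of sizes `n i`. -/
abbrev MIdx {r : ℕ} (n : Fin r → ℕ) : Type := Σ i : Fin r, Fin (n i)

/-- The (lexicographic) linear order of the positions in `MIdx n`, corresponding to the
usual order of `{1, …, n₁ + ⋯ + n_r}`. -/
def mlt {r : ℕ} {n : Fin r → ℕ} (a b : MIdx n) : Prop :=
  a.1 < b.1 ∨ (a.1 = b.1 ∧ (a.2 : ℕ) < (b.2 : ℕ))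

/-- The nonnegative orthant `ℝ₊^ι`. -/
def orth (ι : Type*) : Set (ι → ℝ) := {t | ∀ i, 0 ≤ t i}

/-- `π` is a partition of the type `ι`: the blocks are nonempty and every element belongs
to exactly one block. -/
def IsPartition {ι : Type*} (π : Finset (Finset ι)) : Prop :=
  (∀ B ∈ π, B.Nonempty) ∧ ∀ j : ι, ∃! B, B ∈ π ∧ j ∈ B

/-- `π` has no singleton blocks. -/
def NoSingletons {ι : Type*} (π : Finset (Finset ι)) : Prop := ∀ B ∈ π, 2 ≤ B.card

/-- All blocks of `π` have cardinality two. -/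
def IsPairing {ι : Type*} (π : Finset (Finset ι)) : Prop := ∀ B ∈ π, B.card = 2

/-- `π` has at least one block of cardinality at least three. -/
def HasBigBlock {ι : Type*} (π : Finset (Finset ι)) : Prop := ∃ B ∈ π, 3 ≤ B.card

/-- `π` respects the grouping given by the labelling `lbl`: no block contains two distinct
elements with the same label. -/
def RespectsG {ι κ : Type*} (lbl : ι → κ) (π : Finset (Finset ι)) : Prop :=
  ∀ B ∈ π, ∀ a ∈ B, ∀ b ∈ B, lbl a = lbl b → a = b

/-- `π` is non-crossing with respect to the order `lt`. -/
def NonCrossingG {ι : Type*} (lt : ι → ι → Prop) (π : Finset (Finset ι)) : Prop :=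
  ∀ B₁ ∈ π, ∀ B₂ ∈ π, B₁ ≠ B₂ → ∀ x₁ ∈ B₁, ∀ y₁ ∈ B₁, ∀ x₂ ∈ B₂, ∀ y₂ ∈ B₂,
    ¬ (lt x₁ x₂ ∧ lt x₂ y₁ ∧ lt y₁ y₂)

/-- some block of `π` contains an element labelled `i` and an element labelled `j`. -/
def LinksG {ι κ : Type*} (lbl : ι → κ) (π : Finset (Finset ι)) (i j : κ) : Prop :=
  ∃ B ∈ π, (∃ a ∈ B, lbl a = i) ∧ (∃ b ∈ B, lbl b = j)

/-- the graph on the labels in `S`, with edges given by `LinksG`, is connected. -/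
def ConnectsG {ι κ : Type*} (lbl : ι → κ) (π : Finset (Finset ι)) (S : Set κ) : Prop :=
  ∀ i ∈ S, ∀ j ∈ S, Relation.ReflTransGen (LinksG lbl π) i j

/-- `π` respects the interval partition `n₁ ⊗ ⋯ ⊗ n_r`. -/
abbrev Respects {r : ℕ} {n : Fin r → ℕ} (π : Finset (Finset (MIdx n))) : Prop :=
  RespectsG Sigma.fst π

/-- `π` is non-crossing (with respect to the order of positions). -/
abbrev NonCrossing {r : ℕ} {n : Fin r → ℕ} (π : Finset (Finset (MIdx n))) : Prop :=
  NonCrossingG mlt π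

/-- `π` connects the interval partition `n₁ ⊗ ⋯ ⊗ n_r`. -/
abbrev Connects {r : ℕ} {n : Fin r → ℕ} (π : Finset (Finset (MIdx n))) : Prop :=
  ConnectsG Sigma.fst π Set.univ

open scoped Classical in
/-- A block of `π` containing `j` (junk value `∅` if there is none). -/
def blockOf {ι : Type*} (π : Finset (Finset ι)) (j : ι) : Finset ι :=
  if h : ∃ B ∈ π, j ∈ B then h.choose else ∅

/-- The partition integral `∫_π f`: the integral, over the nonnegative orthant indexed by the
blocks of `π`, of the function obtained from `f` by identifying the variables lying in a
common block of `π` (one integration variable per block). -/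
def partInt {ι : Type*} [Fintype ι] [DecidableEq ι] (π : Finset (Finset ι))
    {E : Type*} [NormedAddCommGroup E] [NormedSpace ℝ E] (f : (ι → ℝ) → E) : E :=
  ∫ y in orth {B : Finset ι // B ∈ π},
    f (fun j => if h : blockOf π j ∈ π then y ⟨blockOf π j, h⟩ else 0)

/-- The tensor product `F 0 ⊗ ⋯ ⊗ F (r-1)` as a function on `ℝ^{MIdx n}`. -/
def tensor {r : ℕ} {n : Fin r → ℕ} {E : Type*} [CommMonoid E]
    (F : ∀ i : Fin r, (Fin (n i) → ℝ) → E) : (MIdx n → ℝ) → E :=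
  fun t => ∏ i : Fin r, F i (fun j => t ⟨i, j⟩)

/-- Extension of a vector `t ∈ ℝ^k` to an everywhere-defined family (zero out of range). -/
def ext {k : ℕ} (t : Fin k → ℝ) (j : ℕ) : ℝ := if h : j < k then t ⟨j, h⟩ else 0

/-- The `p`-th arc contraction `f ⌢_p g`: the middle `p` variables are integrated out
(in reversed pairing) over `ℝ₊^p`. -/
def arcC (n m p : ℕ) (f : (Fin n → ℝ) → ℂ) (g : (Fin m → ℝ) → ℂ) :
    (Fin (n + m - 2 * p) → ℝ) → ℂ := fun t =>
  ∫ s in orth (Fin p),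
    f (fun j => if (j : ℕ) < n - p then ext t (j : ℕ) else ext s ((j : ℕ) - (n - p))) *
    g (fun j => if (j : ℕ) < p then ext s (p - 1 - (j : ℕ)) else ext t (n - p + ((j : ℕ) - p)))

/-- The `q`-th star contraction `f ⋆_q g` (also written `f ⋆_q^{q-1} g`): `q - 1` middle
variables are integrated out over `ℝ₊^{q-1}` and one variable is shared (identified). -/
def starC (n m q : ℕ) (f : (Fin n → ℝ) → ℂ) (g : (Fin m → ℝ) → ℂ) :
    (Fin (n + m - 2 * q + 1) → ℝ) → ℂ := fun t =>
  ∫ s in orth (Fin (q - 1)),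
    f (fun j => if (j : ℕ) < n - q + 1 then ext t (j : ℕ) else ext s ((j : ℕ) - (n - q + 1))) *
    g (fun j => if (j : ℕ) < q - 1 then ext s (q - 1 - 1 - (j : ℕ))
        else ext t (n - q + ((j : ℕ) - (q - 1))))

/-- `f ⋆_{ℓ+p}^{ℓ} g` : the contraction with `ℓ` integrated variables and `p ∈ {0,1}`
identified variables; for `p = 0` this is the arc contraction `f ⌢_ℓ g`, and for `p = 1`
it is the star contraction `f ⋆_{ℓ+1} g`. -/
def starpC (n m ℓ p : ℕ) (f : (Fin n → ℝ) → ℂ) (g : (Fin m → ℝ) → ℂ) :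
    (Fin (n + m - 2 * ℓ - p) → ℝ) → ℂ := fun t =>
  if p = 0 then arcC n m ℓ f g (fun j => ext t (j : ℕ))
  else starC n m (ℓ + 1) f g (fun j => ext t (j : ℕ))

/-- The `L²(ℝ₊^ι)` norm. -/
def l2norm {ι : Type*} [Fintype ι] (h : (ι → ℝ) → ℂ) : ℝ≥0∞ :=
  eLpNorm h 2 (volume.restrict (orth ι))

/-- `f` is mirror-symmetric: `f(t₁,…,tₙ) = conj (f(tₙ,…,t₁))` for a.e. `t ∈ ℝ₊ⁿ`. -/
def MirrorSymmetric {n : ℕ} (f : (Fin n → ℝ) → ℂ) : Prop :=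
  ∀ᵐ t ∂(volume.restrict (orth (Fin n))), f t = (starRingEnd ℂ) (f (fun i => t i.rev))

/-- `f` is bounded and has bounded support. -/
def BddBddSupp {n : ℕ} (f : (Fin n → ℝ) → ℂ) : Prop :=
  (∃ C, ∀ t, ‖f t‖ ≤ C) ∧ ∃ R, ∀ t, f t ≠ 0 → ∀ i, |t i| ≤ R

/-- The sequence `f` is tamed: every `f k` is bounded with bounded support and, for every
`p ≥ 2` and every partition `π` of `[pn]` without singletons respecting `n ⊗ ⋯ ⊗ n`
(`p` factors), the sequence `k ↦ ∫_π |f k|^{⊗p}` is bounded. -/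
def Tamed {n : ℕ} (f : ℕ → (Fin n → ℝ) → ℂ) : Prop :=
  (∀ k, BddBddSupp (f k)) ∧
  ∀ p : ℕ, 2 ≤ p → ∀ π : Finset (Finset (MIdx (fun _ : Fin p => n))),
    IsPartition π → NoSingletons π → Respects π →
    ∃ C : ℝ, ∀ k, partInt π (tensor (fun _ x => ‖f k x‖)) ≤ C

open scoped Classical in
/-- `∑_{π ∈ NC_{≥2}(n_{i₁} ⊗ ⋯ ⊗ n_{i_r})} ∫_π f^{(i₁)} ⊗ ⋯ ⊗ f^{(i_r)}`, which by the
diagram formula is the joint moment `φ[I(f^{(i₁)}) ⋯ I(f^{(i_r)})]`. -/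
def momentSum {d : ℕ} (n : Fin d → ℕ) {r : ℕ} (idx : Fin r → Fin d)
    (f : ∀ i : Fin d, (Fin (n i) → ℝ) → ℂ) : ℂ :=
  ∑ π ∈ Finset.univ.filter
      (fun π : Finset (Finset (MIdx (fun a => n (idx a)))) =>
        IsPartition π ∧ NoSingletons π ∧ NonCrossing π ∧ Respects π),
    partInt π (tensor (fun a => f (idx a)))

open scoped Classical in
/-- `∑_{π ∈ NC_{≥2+}(n_{i₁} ⊗ ⋯ ⊗ n_{i_r})} ∫_π f^{(i₁)} ⊗ ⋯ ⊗ f^{(i_r)}`: the part of the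
diagram sum over partitions having at least one block of cardinality at least `3`. -/
def momentSumPlus {d : ℕ} (n : Fin d → ℕ) {r : ℕ} (idx : Fin r → Fin d)
    (f : ∀ i : Fin d, (Fin (n i) → ℝ) → ℂ) : ℂ :=
  ∑ π ∈ Finset.univ.filter
      (fun π : Finset (Finset (MIdx (fun a => n (idx a)))) =>
        IsPartition π ∧ NoSingletons π ∧ HasBigBlock π ∧ NonCrossing π ∧ Respects π),
    partInt π (tensor (fun a => f (idx a)))

open scoped Classical in
/-- `∑_{π ∈ NC₂(n_{i₁} ⊗ ⋯ ⊗ n_{i_r})} ∫_π f^{(i₁)} ⊗ ⋯ ⊗ f^{(i_r)}`: the part of the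
diagram sum over non-crossing (respecting) pairings. -/
def pairingSum {d : ℕ} (n : Fin d → ℕ) {r : ℕ} (idx : Fin r → Fin d)
    (f : ∀ i : Fin d, (Fin (n i) → ℝ) → ℂ) : ℂ :=
  ∑ π ∈ Finset.univ.filter
      (fun π : Finset (Finset (MIdx (fun a => n (idx a)))) =>
        IsPartition π ∧ IsPairing π ∧ NonCrossing π ∧ Respects π),
    partInt π (tensor (fun a => f (idx a)))

open scoped Classical in
/-- `∏_{{a,b} ∈ σ} c(i_a, i_b)` for a pairing `σ` of `Fin r`. -/
def pairProd {r d : ℕ} (c : Matrix (Fin d) (Fin d) ℝ) (idx : Fin r → Fin d)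
    (σ : Finset (Finset (Fin r))) : ℝ :=
  ∏ B ∈ σ, if h : B.Nonempty then c (idx (B.min' h)) (idx (B.max' h)) else 1

open scoped Classical in
/-- `∑_{σ ∈ NC₂(r)} ∏_{{a,b} ∈ σ} c(i_a, i_b)`: the joint moment
`φ(s_{i₁} ⋯ s_{i_r})` of a semicircular family with covariance `c`. -/
def semicircMoment {r d : ℕ} (c : Matrix (Fin d) (Fin d) ℝ) (idx : Fin r → Fin d) : ℝ :=
  ∑ σ ∈ Finset.univ.filter
      (fun σ : Finset (Finset (Fin r)) =>
        IsPartition σ ∧ IsPairing σ ∧ NonCrossingG (· < ·) σ),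
    pairProd c idx σ

/-- The restriction of a partition `π` of `MIdx n` to the positions whose interval label
lies in `S`, viewed as a partition of the corresponding sub-index set. -/
def restrictPart {r : ℕ} {n : Fin r → ℕ} (π : Finset (Finset (MIdx n))) (S : Finset (Fin r)) :
    Finset (Finset {a : MIdx n // a.1 ∈ S}) :=
  (π.filter (fun B => ∀ a ∈ B, a.1 ∈ S)).image (fun B => B.subtype (fun a => a.1 ∈ S))

/-- The tensor product `⊗_{j ∈ I q} f j` viewed as a function on the sub-index set of the
positions with label in `I q`. -/
def subTensor {r : ℕ} {n : Fin r → ℕ} {m : ℕ} (I : Fin m → Finset (Fin r)) (q : Fin m)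
    (f : ∀ i : Fin r, (Fin (n i) → ℝ) → ℂ) : ({a : MIdx n // a.1 ∈ I q} → ℝ) → ℂ :=
  fun t => ∏ j ∈ (I q).attach, f j.1 (fun v => t ⟨⟨j.1, v⟩, j.2⟩)

/-! ### Auxiliary lemmas -/

section PfAux

variable {ι : Type*}

theorem pf_blockOf_mem_and {π : Finset (Finset ι)} (h : IsPartition π) (j : ι) :
    blockOf π j ∈ π ∧ j ∈ blockOf π j := by
  classical
  obtain ⟨B, ⟨hB, hj⟩, -⟩ := h.2 j
  have hex : ∃ B ∈ π, j ∈ B := ⟨B, hB, hj⟩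
  unfold blockOf
  rw [dif_pos hex]
  exact hex.choose_spec

theorem pf_blockOf_eq {π : Finset (Finset ι)} (h : IsPartition π) {B : Finset ι} {j : ι}
    (hB : B ∈ π) (hj : j ∈ B) : blockOf π j = B := by
  obtain ⟨B', -, huniq⟩ := h.2 j
  have h1 := pf_blockOf_mem_and h j
  exact (huniq _ ⟨h1.1, h1.2⟩).trans (huniq _ ⟨hB, hj⟩).symm

theorem pf_subtype_map_of_forall {p : ι → Prop} [DecidablePred p] {s : Finset ι}
    (h : ∀ a ∈ s, p a) : (s.subtype p).map (Function.Embedding.subtype p) = s := by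
  rw [Finset.subtype_map, Finset.filter_true_of_mem h]

theorem pf_map_subtype_subtype {p : ι → Prop} [DecidablePred p] (s : Finset {x // p x}) :
    (s.map (Function.Embedding.subtype p)).subtype p = s := by
  ext a
  simp only [Finset.mem_subtype, Finset.mem_map, Function.Embedding.coe_subtype]
  constructor
  · rintro ⟨b, hb, hba⟩; rwa [← Subtype.ext hba]
  · intro ha; exact ⟨a, ha, rfl⟩

end PfAux

theorem pf_mem_restrictPart_iff {r : ℕ} {n : Fin r → ℕ} {π : Finset (Finset (MIdx n))}
    {S : Finset (Fin r)} {C : Finset {a : MIdx n // a.1 ∈ S}} :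
    C ∈ restrictPart π S ↔
      ∃ B, (B ∈ π ∧ ∀ a ∈ B, a.1 ∈ S) ∧ B.subtype (fun a => a.1 ∈ S) = C := by
  simp [restrictPart, Finset.mem_image, Finset.mem_filter]

theorem pf_orth_pi (ι : Type*) [Fintype ι] :
    (volume : Measure (ι → ℝ)).restrict (orth ι)
      = Measure.pi (fun _ : ι => (volume : Measure ℝ).restrict (Set.Ici 0)) := by
  have horth : orth ι = Set.univ.pi (fun _ => Set.Ici (0:ℝ)) := by
    ext t; simp only [orth, Set.mem_setOf_eq, Set.mem_univ_pi, Set.mem_Ici]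
  refine (Measure.pi_eq fun s hs => ?_).symm
  rw [horth, Measure.restrict_apply (MeasurableSet.univ_pi hs), ← Set.pi_inter_distrib,
    volume_pi_pi]
  exact Finset.prod_congr rfl fun i _ => (Measure.restrict_apply (hs i)).symm

def pfSigmaME (m : Type*) (κ : m → Type*) : ((Σ q, κ q) → ℝ) ≃ᵐ (∀ q, κ q → ℝ) where
  toEquiv := Equiv.piCurry fun _ _ => ℝ
  measurable_toFun :=
    measurable_pi_lambda _ fun _ => measurable_pi_lambda _ fun _ => measurable_pi_apply _
  measurable_invFun :=
    measurable_pi_lambda _ fun ij => (measurable_pi_apply ij.2).comp (measurable_pi_apply ij.1)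

theorem pf_mp_uncurry {m : Type*} [Fintype m] (κ : m → Type*) [∀ q, Fintype (κ q)]
    (ν : Measure ℝ) [SigmaFinite ν] :
    MeasurePreserving ((pfSigmaME m κ).symm)
      (Measure.pi fun q => Measure.pi fun _ : κ q => ν)
      (Measure.pi fun _ : Σ q, κ q => ν) := by
  refine ⟨(pfSigmaME m κ).symm.measurable, ?_⟩
  refine (Measure.pi_eq fun s hs => ?_).symm
  rw [MeasurableEquiv.map_apply]
  have hpre : (pfSigmaME m κ).symm ⁻¹' Set.univ.pi s
      = Set.univ.pi (fun q => Set.univ.pi (fun k => s ⟨q, k⟩)) := by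
    ext w
    simp only [Set.mem_preimage, Set.mem_univ_pi]
    exact ⟨fun h q k => h ⟨q, k⟩, fun h ij => h ij.1 ij.2⟩
  rw [hpre, Measure.pi_pi]
  simp_rw [Measure.pi_pi]
  rw [← Finset.univ_sigma_univ]
  exact (Finset.prod_sigma _ _ fun ij => ν (s ij)).symm

theorem pf_integral_pi_prod {ι : Type*} [Fintype ι] {E : ι → Type*} [∀ i, MeasurableSpace (E i)]
    (μ : ∀ i, Measure (E i)) [∀ i, SigmaFinite (μ i)] (f : ∀ i, E i → ℂ) :
    ∫ x, ∏ i, f i (x i) ∂Measure.pi μ = ∏ i, ∫ x, f i x ∂μ i := by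
  letI : ∀ i, MeasureSpace (E i) := fun i => ⟨μ i⟩
  exact MeasureTheory.integral_fintype_prod_eq_prod f

theorem pf_piCongrLeft_apply {ι ι' : Type*} (e : ι' ≃ ι) (x : ι' → ℝ) (a : ι) :
    MeasurableEquiv.piCongrLeft (fun _ : ι => ℝ) e x a = x (e.symm a) := by
  rw [MeasurableEquiv.coe_piCongrLeft]
  conv_lhs => rw [← e.apply_symm_apply a]
  rw [Equiv.piCongrLeft_apply_apply]
set_option maxHeartbeats 2000000 in
/-- a non-crossing respecting partition without singletons decomposes into
its connected components, each component restriction is a non-crossing respecting connected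
partition without singletons, and the partition integral factorizes accordingly. -/
theorem partInt_factorizes_over_connected_components
    (r : ℕ) (hr : 1 ≤ r) (n : Fin r → ℕ) (hn : ∀ i, 1 ≤ n i)
    (π : Finset (Finset (MIdx n)))
    (hpart : IsPartition π) (hns : NoSingletons π) (hnc : NonCrossing π) (hresp : Respects π)
    (m : ℕ) (I : Fin m → Finset (Fin r))
    (hne : ∀ q, (I q).Nonempty)
    (hcover : ∀ i : Fin r, ∃! q, i ∈ I q)
    (hblk : ∀ B ∈ π, ∃ q, ∀ a ∈ B, a.1 ∈ I q)
    (hconn : ∀ q, ConnectsG Sigma.fst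
      (π.filter (fun B => ∀ a ∈ B, a.1 ∈ I q)) (↑(I q) : Set (Fin r))) :
    (∀ q : Fin m,
      IsPartition (restrictPart π (I q)) ∧
      NoSingletons (restrictPart π (I q)) ∧
      NonCrossingG (fun a b : {a : MIdx n // a.1 ∈ I q} => mlt a.1 b.1)
        (restrictPart π (I q)) ∧
      RespectsG (fun a : {a : MIdx n // a.1 ∈ I q} => a.1.1) (restrictPart π (I q)) ∧
      ConnectsG (fun a : {a : MIdx n // a.1 ∈ I q} => a.1.1) (restrictPart π (I q))
        (↑(I q) : Set (Fin r))) ∧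
    ∀ f : ∀ i : Fin r, (Fin (n i) → ℝ) → ℂ,
      (∀ i, Measurable (f i)) → (∀ i, BddBddSupp (f i)) →
      partInt π (tensor f) = ∏ q : Fin m, partInt (restrictPart π (I q)) (subTensor I q f) := by
  classical
  -- uniqueness of the component containing a given label
  have huniqq : ∀ {q q' : Fin m} {i : Fin r}, i ∈ I q → i ∈ I q' → q = q' := by
    intro q q' i h h'
    obtain ⟨q₀, -, hu⟩ := hcover i
    exact (hu q h).trans (hu q' h').symm
  have hblkq : ∀ (q : Fin m) (B : Finset (MIdx n)), B ∈ π → (∀ a ∈ B, a.1 ∈ I q) →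
      B.subtype (fun a : MIdx n => a.1 ∈ I q) ∈ restrictPart π (I q) :=
    fun q B hB hall => pf_mem_restrictPart_iff.mpr ⟨B, ⟨hB, hall⟩, rfl⟩
  have hlabel : ∀ (q : Fin m) (B : Finset (MIdx n)), B ∈ π → ∀ a ∈ B, a.1 ∈ I q →
      ∀ b ∈ B, b.1 ∈ I q := by
    intro q B hB a ha haq b hb
    obtain ⟨q', hq'⟩ := hblk B hB
    rw [← huniqq (hq' a ha) haq]
    exact hq' b hb
  have hpartq : ∀ q, IsPartition (restrictPart π (I q)) := by
    intro q
    constructor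
    · intro C hC
      obtain ⟨B, ⟨hB, hall⟩, rfl⟩ := pf_mem_restrictPart_iff.mp hC
      obtain ⟨a, ha⟩ := hpart.1 B hB
      exact ⟨⟨a, hall a ha⟩, Finset.mem_subtype.mpr ha⟩
    · intro j
      obtain ⟨B, ⟨hB, hjB⟩, huB⟩ := hpart.2 j.1
      have hall : ∀ a ∈ B, a.1 ∈ I q := hlabel q B hB j.1 hjB j.2
      refine ⟨B.subtype _, ⟨hblkq q B hB hall, Finset.mem_subtype.mpr hjB⟩, ?_⟩
      rintro C ⟨hC, hjC⟩
      obtain ⟨B', ⟨hB', hall'⟩, rfl⟩ := pf_mem_restrictPart_iff.mp hC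
      rw [huB B' ⟨hB', Finset.mem_subtype.mp hjC⟩]
  have hnsq : ∀ q, NoSingletons (restrictPart π (I q)) := by
    intro q C hC
    obtain ⟨B, ⟨hB, hall⟩, rfl⟩ := pf_mem_restrictPart_iff.mp hC
    rw [Finset.card_subtype, Finset.filter_true_of_mem hall]
    exact hns B hB
  have hncq : ∀ q, NonCrossingG (fun a b : {a : MIdx n // a.1 ∈ I q} => mlt a.1 b.1)
      (restrictPart π (I q)) := by
    intro q C₁ hC₁ C₂ hC₂ hne' x₁ hx₁ y₁ hy₁ x₂ hx₂ y₂ hy₂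
    obtain ⟨B₁, ⟨hB₁, hall₁⟩, rfl⟩ := pf_mem_restrictPart_iff.mp hC₁
    obtain ⟨B₂, ⟨hB₂, hall₂⟩, rfl⟩ := pf_mem_restrictPart_iff.mp hC₂
    have hBne : B₁ ≠ B₂ := fun h => hne' (by rw [h])
    exact hnc B₁ hB₁ B₂ hB₂ hBne x₁.1 (Finset.mem_subtype.mp hx₁) y₁.1
      (Finset.mem_subtype.mp hy₁) x₂.1 (Finset.mem_subtype.mp hx₂) y₂.1
      (Finset.mem_subtype.mp hy₂)
  have hrespq : ∀ q, RespectsG (fun a : {a : MIdx n // a.1 ∈ I q} => a.1.1)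
      (restrictPart π (I q)) := by
    intro q C hC a ha b hb hab
    obtain ⟨B, ⟨hB, hall⟩, rfl⟩ := pf_mem_restrictPart_iff.mp hC
    exact Subtype.ext
      (hresp B hB a.1 (Finset.mem_subtype.mp ha) b.1 (Finset.mem_subtype.mp hb) hab)
  have hconnq : ∀ q, ConnectsG (fun a : {a : MIdx n // a.1 ∈ I q} => a.1.1)
      (restrictPart π (I q)) (↑(I q) : Set (Fin r)) := by
    intro q i hi j hj
    refine Relation.ReflTransGen.mono ?_ i j (hconn q i hi j hj)
    rintro x y ⟨B, hBf, ⟨a, ha, hax⟩, ⟨b, hb, hby⟩⟩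
    obtain ⟨hB, hall⟩ := Finset.mem_filter.mp hBf
    exact ⟨B.subtype _, hblkq q B hB hall, ⟨⟨a, hall a ha⟩, Finset.mem_subtype.mpr ha, hax⟩,
      ⟨⟨b, hall b hb⟩, Finset.mem_subtype.mpr hb, hby⟩⟩
  refine ⟨fun q => ⟨hpartq q, hnsq q, hncq q, hrespq q, hconnq q⟩, ?_⟩
  -- the integral factorization
  intro f _ _
  have hbo : ∀ j : MIdx n, blockOf π j ∈ π ∧ j ∈ blockOf π j := pf_blockOf_mem_and hpart
  have hboq : ∀ (q : Fin m) (a : {a : MIdx n // a.1 ∈ I q}),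
      blockOf (restrictPart π (I q)) a ∈ restrictPart π (I q) ∧
        a ∈ blockOf (restrictPart π (I q)) a := fun q => pf_blockOf_mem_and (hpartq q)
  have horig : ∀ (q : Fin m) (C : Finset {a : MIdx n // a.1 ∈ I q}),
      C ∈ restrictPart π (I q) →
      C.map (Function.Embedding.subtype _) ∈ π ∧
        ∀ a ∈ C.map (Function.Embedding.subtype _), a.1 ∈ I q := by
    intro q C hC
    obtain ⟨B, ⟨hB, hall⟩, rfl⟩ := pf_mem_restrictPart_iff.mp hC
    rw [pf_subtype_map_of_forall hall]
    exact ⟨hB, hall⟩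
  let tofun : (Σ q : Fin m,
        {C : Finset {a : MIdx n // a.1 ∈ I q} // C ∈ restrictPart π (I q)}) →
      {B : Finset (MIdx n) // B ∈ π} :=
    fun x => ⟨x.2.1.map (Function.Embedding.subtype _), (horig x.1 x.2.1 x.2.2).1⟩
  have hinj : Function.Injective tofun := by
    rintro ⟨q₁, C₁, hC₁⟩ ⟨q₂, C₂, hC₂⟩ h
    have hmapeq : C₁.map (Function.Embedding.subtype _)
        = C₂.map (Function.Embedding.subtype _) := congrArg Subtype.val h
    obtain ⟨a, ha⟩ := (hpartq q₁).1 C₁ hC₁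
    have ha1 : a.1 ∈ C₁.map (Function.Embedding.subtype _) :=
      Finset.mem_map_of_mem _ ha
    have ha2 : a.1.1 ∈ I q₂ := (horig q₂ C₂ hC₂).2 a.1 (hmapeq ▸ ha1)
    obtain rfl : q₁ = q₂ := huniqq a.2 ha2
    obtain rfl : C₁ = C₂ := Finset.map_injective _ hmapeq
    rfl
  have hsurj : Function.Surjective tofun := by
    rintro ⟨B, hB⟩
    obtain ⟨q, hall⟩ := hblk B hB
    exact ⟨⟨q, ⟨B.subtype _, hblkq q B hB hall⟩⟩, Subtype.ext (pf_subtype_map_of_forall hall)⟩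
  let E := Equiv.ofBijective tofun ⟨hinj, hsurj⟩
  have hEsym : ∀ (q : Fin m) (i : Fin r) (hi : i ∈ I q) (v : Fin (n i)),
      E.symm ⟨blockOf π ⟨i, v⟩, (hbo ⟨i, v⟩).1⟩
        = ⟨q, ⟨blockOf (restrictPart π (I q)) ⟨⟨i, v⟩, hi⟩, (hboq q ⟨⟨i, v⟩, hi⟩).1⟩⟩ := by
    intro q i hi v
    rw [Equiv.symm_apply_eq]
    refine Subtype.ext ?_
    show blockOf π ⟨i, v⟩ = (blockOf (restrictPart π (I q)) ⟨⟨i, v⟩, hi⟩).map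
      (Function.Embedding.subtype fun a => a.1 ∈ I q)
    have h1 := hboq q ⟨⟨i, v⟩, hi⟩
    refine pf_blockOf_eq hpart (horig q _ h1.1).1 ?_
    exact Finset.mem_map_of_mem _ h1.2
  have htd : ∀ (y : {B : Finset (MIdx n) // B ∈ π} → ℝ) (j : MIdx n),
      (if h : blockOf π j ∈ π then y ⟨blockOf π j, h⟩ else 0)
        = y ⟨blockOf π j, (hbo j).1⟩ := fun y j => dif_pos (hbo j).1
  have htdq : ∀ (q : Fin m) (z : {C // C ∈ restrictPart π (I q)} → ℝ)
      (a : {a : MIdx n // a.1 ∈ I q}),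
      (if h : blockOf (restrictPart π (I q)) a ∈ restrictPart π (I q)
        then z ⟨blockOf (restrictPart π (I q)) a, h⟩ else 0)
        = z ⟨blockOf (restrictPart π (I q)) a, (hboq q a).1⟩ :=
    fun q z a => dif_pos (hboq q a).1
  let cmp : Fin r → Fin m := fun i => (hcover i).choose
  have hcmp : ∀ i, i ∈ I (cmp i) := fun i => (hcover i).choose_spec.1
  have hfib : ∀ q, Finset.univ.filter (fun i => cmp i = q) = I q := by
    intro q; ext i
    simp only [Finset.mem_filter, Finset.mem_univ, true_and]
    exact ⟨fun h => h ▸ hcmp i, fun h => huniqq (hcmp i) h⟩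
  simp only [partInt, pf_orth_pi]
  refine Eq.trans (((measurePreserving_piCongrLeft
    (fun _ : {B : Finset (MIdx n) // B ∈ π} =>
      (volume : Measure ℝ).restrict (Set.Ici 0)) E).integral_comp' _).symm) ?_
  refine Eq.trans (((pf_mp_uncurry
    (fun q : Fin m => {C : Finset {a : MIdx n // a.1 ∈ I q} // C ∈ restrictPart π (I q)})
    ((volume : Measure ℝ).restrict (Set.Ici 0))).integral_comp' _).symm) ?_
  refine Eq.trans (integral_congr_ae (Filter.Eventually.of_forall fun w => ?_))
    (pf_integral_pi_prod _ (fun q (z : {C // C ∈ restrictPart π (I q)} → ℝ) => subTensor I q f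
      (fun a => if h : blockOf (restrictPart π (I q)) a ∈ restrictPart π (I q)
        then z ⟨blockOf (restrictPart π (I q)) a, h⟩ else 0)))
  -- pointwise identity
  simp only [tensor, subTensor, htd, htdq]
  simp only [pf_piCongrLeft_apply]
  rw [← Finset.prod_fiberwise_of_maps_to (g := cmp) (fun i _ => Finset.mem_univ (cmp i))
    (fun i => f i (fun v =>
      (pfSigmaME _ _).symm w (E.symm ⟨blockOf π ⟨i, v⟩, (hbo ⟨i, v⟩).1⟩)))]
  refine Finset.prod_congr rfl fun q _ => ?_
  rw [hfib q, ← Finset.prod_attach (I q) (fun i => f i (fun v =>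
      (pfSigmaME _ _).symm w (E.symm ⟨blockOf π ⟨i, v⟩, (hbo ⟨i, v⟩).1⟩)))]
  refine Finset.prod_congr rfl fun j _ => ?_
  refine congrArg _ (funext fun v => ?_)
  rw [hEsym q j.1 j.2 v]
  rfl
end
end

section
/- Let r ≥ 2 and let n₁,…,n_r ≥ 1 be integers with n = n₁+⋯+n_r. Let π be a non-crossing partition of [n] without singleton blocks that respects the interval partition n₁⊗⋯⊗n_r with blocks B₁,…,B_r. Then there exist an index s ∈ {1,…,r−1} and a block V of π that contains both the last element of B_s and the first element of B_{s+1}, i.e. both n₁+⋯+n_s and n₁+⋯+n_s+1 belong to V. -/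
open MeasureTheory Filter Finset Topology
open scoped ENNReal

noncomputable section

namespace Stmt5Aux

variable {r : ℕ} {n : Fin r → ℕ}

open scoped Classical

/-- Sum of the first `m` block sizes. -/
def S (n : Fin r → ℕ) (m : ℕ) : ℕ :=
  ∑ k ∈ Finset.univ.filter (fun k : Fin r => (k : ℕ) < m), n k

/-- The global rank of a position. -/
def pos (a : MIdx n) : ℕ := S n (a.1 : ℕ) + (a.2 : ℕ)

lemma S_succ (m : ℕ) (hm : m < r) : S n (m + 1) = S n m + n ⟨m, hm⟩ := by
  have hset : Finset.univ.filter (fun k : Fin r => (k : ℕ) < m + 1)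
      = insert (⟨m, hm⟩ : Fin r) (Finset.univ.filter (fun k : Fin r => (k : ℕ) < m)) := by
    ext k
    simp [Nat.lt_succ_iff_lt_or_eq, Fin.ext_iff, or_comm]
    omega
  rw [S, hset, Finset.sum_insert (by simp)]
  simp [S, add_comm]

lemma S_mono {m m' : ℕ} (h : m ≤ m') : S n m ≤ S n m' := by
  apply Finset.sum_le_sum_of_subset
  intro k hk
  simp only [Finset.mem_filter, Finset.mem_univ, true_and] at hk ⊢
  omega

lemma pos_lt_of_mlt {a b : MIdx n} (h : mlt a b) : pos a < pos b := by
  rcases h with h | ⟨h1, h2⟩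
  · have h' : (a.1 : ℕ) < (b.1 : ℕ) := h
    have hS : S n ((a.1 : ℕ) + 1) ≤ S n (b.1 : ℕ) := S_mono h'
    have hSs : S n ((a.1 : ℕ) + 1) = S n (a.1 : ℕ) + n a.1 := by
      rw [S_succ (a.1 : ℕ) a.1.isLt]
    have ha2 : (a.2 : ℕ) < n a.1 := a.2.isLt
    unfold pos
    omega
  · have hS : S n (a.1 : ℕ) = S n (b.1 : ℕ) := by rw [h1]
    unfold pos
    omega

lemma mlt_trich (a b : MIdx n) : mlt a b ∨ a = b ∨ mlt b a := by
  obtain ⟨i, j⟩ := a; obtain ⟨k, l⟩ := b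
  rcases lt_trichotomy (i : ℕ) (k : ℕ) with h | h | h
  · exact Or.inl (Or.inl h)
  · have hik : i = k := Fin.ext h
    subst hik
    rcases lt_trichotomy (j : ℕ) (l : ℕ) with h2 | h2 | h2
    · exact Or.inl (Or.inr ⟨rfl, h2⟩)
    · have : j = l := Fin.ext h2
      subst this; exact Or.inr (Or.inl rfl)
    · exact Or.inr (Or.inr (Or.inr ⟨rfl, h2⟩))
  · exact Or.inr (Or.inr (Or.inl h))

lemma pos_inj {a b : MIdx n} (h : pos a = pos b) : a = b := by
  rcases mlt_trich a b with h' | h' | h'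
  · exact absurd h (Nat.ne_of_lt (pos_lt_of_mlt h'))
  · exact h'
  · exact absurd h.symm (Nat.ne_of_lt (pos_lt_of_mlt h'))

lemma mlt_iff_pos {a b : MIdx n} : mlt a b ↔ pos a < pos b := by
  constructor
  · exact pos_lt_of_mlt
  · intro h
    rcases mlt_trich a b with h' | h' | h'
    · exact h'
    · subst h'; omega
    · exact absurd (pos_lt_of_mlt h') (by omega)

/-- Successor construction: if `a` is not the maximum, there is an element of rank
`pos a + 1`, and it either shares `a`'s label or sits just past a boundary. -/
lemma succ_exists (hn : ∀ i, 1 ≤ n i) {a b : MIdx n} (h : mlt a b) :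
    ∃ c : MIdx n, pos c = pos a + 1 ∧
      (c.1 = a.1 ∨ ((c.1 : ℕ) = (a.1 : ℕ) + 1 ∧ (a.2 : ℕ) + 1 = n a.1 ∧ (c.2 : ℕ) = 0)) := by
  by_cases hj : (a.2 : ℕ) + 1 < n a.1
  · refine ⟨⟨a.1, ⟨(a.2 : ℕ) + 1, hj⟩⟩, ?_, Or.inl rfl⟩
    unfold pos
    simp [add_assoc]
  · have hj' : (a.2 : ℕ) + 1 = n a.1 := by
      have := a.2.isLt; omega
    have hlt : (a.1 : ℕ) + 1 < r := by
      rcases h with h | ⟨h1, h2⟩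
      · have h' : (a.1 : ℕ) < (b.1 : ℕ) := h
        have := b.1.isLt; omega
      · have hb2 : (b.2 : ℕ) < n b.1 := b.2.isLt
        have hnn : n a.1 = n b.1 := congrArg n h1
        omega
    refine ⟨⟨⟨(a.1 : ℕ) + 1, hlt⟩, ⟨0, hn _⟩⟩, ?_, Or.inr ⟨rfl, hj', rfl⟩⟩
    unfold pos
    simp only
    rw [S_succ (a.1 : ℕ) a.1.isLt]
    simp only [Fin.eta, add_zero]
    omega

end Stmt5Aux

/-- a non-crossing partition without singletons respecting the interval
partition contains a block with the last element of some `B_s` and the first element of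
`B_{s+1}`. -/
theorem exists_block_linking_adjacent_intervals
    (r : ℕ) (hr : 2 ≤ r) (n : Fin r → ℕ) (hn : ∀ i, 1 ≤ n i)
    (π : Finset (Finset (MIdx n)))
    (hpart : IsPartition π) (hns : NoSingletons π) (hnc : NonCrossing π)
    (hresp : Respects π) :
    ∃ s t : Fin r, (t : ℕ) = (s : ℕ) + 1 ∧
      ∃ V ∈ π, ∃ a ∈ V, ∃ b ∈ V,
        a.1 = s ∧ ((a.2 : ℕ) + 1 = n s) ∧ b.1 = t ∧ (b.2 : ℕ) = 0 := by
  classical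
  open Stmt5Aux in
  -- P d : there is a pair in a common block at distance d+1
  have hex : ∃ d : ℕ, ∃ B ∈ π, ∃ a ∈ B, ∃ b ∈ B, pos b = pos a + d + 1 := by
    have h0r : 0 < r := by omega
    set x : MIdx n := ⟨⟨0, h0r⟩, ⟨0, hn _⟩⟩ with hx
    obtain ⟨B, ⟨hB, hxB⟩, -⟩ := hpart.2 x
    have hcard : 1 < B.card := hns B hB
    obtain ⟨y, hyB, hyx⟩ := Finset.exists_mem_ne hcard x
    rcases mlt_trich x y with h | h | h
    · have h' := pos_lt_of_mlt h
      exact ⟨pos y - pos x - 1, B, hB, x, hxB, y, hyB, by omega⟩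
    · exact absurd h.symm hyx
    · have h' := pos_lt_of_mlt h
      exact ⟨pos x - pos y - 1, B, hB, y, hyB, x, hxB, by omega⟩
  set d := Nat.find hex with hd
  obtain ⟨B, hB, a, haB, b, hbB, hab⟩ := Nat.find_spec hex
  have hmlt : mlt a b := mlt_iff_pos.mpr (by omega)
  obtain ⟨c, hc, hcases⟩ := succ_exists hn hmlt
  by_cases hd0 : d = 0
  · -- minimal gap is 1 : b = c is the successor of a
    have hbc : b = c := pos_inj (by omega)
    rcases hcases with hsame | ⟨h1, h2, h3⟩
    · -- same label: contradicts Respects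
      have heq : a = b := hresp B hB a haB b hbB (by rw [hbc, hsame])
      have hlt := pos_lt_of_mlt hmlt
      rw [heq] at hlt
      exact absurd hlt (lt_irrefl _)
    · refine ⟨a.1, b.1, ?_, B, hB, a, haB, b, hbB, rfl, h2, rfl, ?_⟩
      · rw [hbc]; exact h1
      · rw [hbc]; exact h3
  · -- gap ≥ 2 : derive a strictly smaller gap, contradiction with minimality
    exfalso
    have hcb : pos c < pos b := by omega
    have hmltac : mlt a c := mlt_iff_pos.mpr (by omega)
    have hmltcb : mlt c b := mlt_iff_pos.mpr hcb
    obtain ⟨B', ⟨hB', hcB'⟩, huniq⟩ := hpart.2 c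
    by_cases hBB : B' = B
    · -- c in the same block as a: gap 0 < d
      subst hBB
      exact Nat.find_min hex (by omega : 0 < d) ⟨B', hB', a, haB, c, hcB', by omega⟩
    · obtain ⟨c', hc'B', hc'c⟩ := Finset.exists_mem_ne (hns B' hB') c
      have hc'a : c' ≠ a := by
        intro he; subst he
        obtain ⟨Ba, -, hu⟩ := hpart.2 c'
        exact hBB ((hu B' ⟨hB', hc'B'⟩).trans (hu B ⟨hB, haB⟩).symm)
      have hc'b : c' ≠ b := by
        intro he; subst he
        obtain ⟨Bb, -, hu⟩ := hpart.2 c'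
        exact hBB ((hu B' ⟨hB', hc'B'⟩).trans (hu B ⟨hB, hbB⟩).symm)
      rcases lt_trichotomy (pos c') (pos a) with h | h | h
      · -- c' < a < c < b : crossing
        exact hnc B' hB' B hB hBB c' hc'B' c hcB' a haB b hbB
          ⟨mlt_iff_pos.mpr h, hmltac, hmltcb⟩
      · exact hc'a (pos_inj h)
      · rcases lt_trichotomy (pos c') (pos b) with h2 | h2 | h2
        · -- a < c ≤ c' < b, c' ≠ c : smaller pair (c, c') in B'
          have hcc' : pos c < pos c' := by
            have : pos c ≠ pos c' := fun he => hc'c (pos_inj he.symm)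
            omega
          refine Nat.find_min hex (by omega : pos c' - pos c - 1 < d)
            ⟨B', hB', c, hcB', c', hc'B', by omega⟩
        · exact hc'b (pos_inj h2)
        · -- a < c < b < c' : crossing
          exact hnc B hB B' hB' (Ne.symm hBB) a haB b hbB c hcB' c' hc'B'
            ⟨hmltac, hmltcb, mlt_iff_pos.mpr h2⟩
end
end

section
/- Let r ≥ 2 and let n₁,…,n_r ≥ 1 be integers with n = n₁+⋯+n_r. Let π be a non-crossing partition of [n] that respects the interval partition n₁⊗⋯⊗n_r with blocks B₁,…,B_r. Then for every s ∈ {1,…,r−1}, there is at most one block of π of cardinality strictly greater than two that links B_s and B_{s+1} (i.e. contains at least one element of B_s and at least one element of B_{s+1}). -/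
open MeasureTheory Filter Finset Topology
open scoped ENNReal

noncomputable section

lemma aux_false {r : ℕ} {n : Fin r → ℕ} {π : Finset (Finset (MIdx n))}
    (hnc : NonCrossing π) (hresp : Respects π)
    {s t : Fin r} (hst : (t : ℕ) = (s : ℕ) + 1)
    {V₁ V₂ : Finset (MIdx n)} (h1 : V₁ ∈ π) (h2 : V₂ ∈ π) (hne : V₁ ≠ V₂)
    (hcard : 3 ≤ V₂.card)
    {a₁ b₁ a₂ b₂ : MIdx n}
    (ha₁ : a₁ ∈ V₁) (ha₁s : a₁.1 = s)
    (hb₁ : b₁ ∈ V₁) (hb₁t : b₁.1 = t)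
    (ha₂ : a₂ ∈ V₂) (ha₂s : a₂.1 = s)
    (hb₂ : b₂ ∈ V₂) (hb₂t : b₂.1 = t)
    (hlt : mlt a₁ a₂) : False := by
  classical
  -- get a third element of V₂
  have hsub : ¬ V₂ ⊆ ({a₂, b₂} : Finset (MIdx n)) := by
    intro h
    have hle := Finset.card_le_card h
    have h2le : ({a₂, b₂} : Finset (MIdx n)).card ≤ 2 :=
      (Finset.card_insert_le _ _).trans (by simp)
    omega
  obtain ⟨c, hc, hcne⟩ := Finset.not_subset.mp hsub
  simp only [Finset.mem_insert, Finset.mem_singleton, not_or] at hcne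
  have hcs : c.1 ≠ s := fun h =>
    hcne.1 (hresp V₂ h2 c hc a₂ ha₂ (by rw [h, ha₂s]))
  have hct : c.1 ≠ t := fun h =>
    hcne.2 (hresp V₂ h2 c hc b₂ hb₂ (by rw [h, hb₂t]))
  have hmab : mlt a₂ b₁ := Or.inl (by
    rw [ha₂s, hb₁t, Fin.lt_def]; omega)
  have hcases : (c.1 : ℕ) < (s : ℕ) ∨ (t : ℕ) < (c.1 : ℕ) := by
    have h1 : (c.1 : ℕ) ≠ (s : ℕ) := fun h => hcs (Fin.ext h)
    have h2 : (c.1 : ℕ) ≠ (t : ℕ) := fun h => hct (Fin.ext h)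
    omega
  rcases hcases with h | h
  · exact hnc V₂ h2 V₁ h1 hne.symm c hc a₂ ha₂ a₁ ha₁ b₁ hb₁
      ⟨Or.inl (by rw [Fin.lt_def, ha₁s]; exact h), hlt, hmab⟩
  · exact hnc V₁ h1 V₂ h2 hne a₁ ha₁ b₁ hb₁ a₂ ha₂ c hc
      ⟨hlt, hmab, Or.inl (by rw [Fin.lt_def, hb₁t]; exact h)⟩

/-- in a non-crossing partition respecting the interval partition, at most
one block of cardinality `> 2` links two given adjacent interval blocks. -/
theorem atMostOne_bigBlock_linking_adjacent_intervals
    (r : ℕ) (hr : 2 ≤ r) (n : Fin r → ℕ) (hn : ∀ i, 1 ≤ n i)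
    (π : Finset (Finset (MIdx n)))
    (hpart : IsPartition π) (hnc : NonCrossing π) (hresp : Respects π) :
    ∀ s t : Fin r, (t : ℕ) = (s : ℕ) + 1 →
      ∀ V₁ ∈ π, ∀ V₂ ∈ π, 3 ≤ V₁.card → 3 ≤ V₂.card →
        (∃ a ∈ V₁, a.1 = s) → (∃ b ∈ V₁, b.1 = t) →
        (∃ a ∈ V₂, a.1 = s) → (∃ b ∈ V₂, b.1 = t) →
        V₁ = V₂ := by
  intro s t hst V₁ h1 V₂ h2 hc1 hc2 ⟨a₁, ha₁, ha₁s⟩ ⟨b₁, hb₁, hb₁t⟩ ⟨a₂, ha₂, ha₂s⟩ ⟨b₂, hb₂, hb₂t⟩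
  by_contra hne
  rcases lt_trichotomy ((a₁.2 : ℕ)) ((a₂.2 : ℕ)) with h | h | h
  · exact aux_false hnc hresp hst h1 h2 hne hc2 ha₁ ha₁s hb₁ hb₁t ha₂ ha₂s hb₂ hb₂t
      (Or.inr ⟨ha₁s.trans ha₂s.symm, h⟩)
  · have hfst : a₁.1 = a₂.1 := ha₁s.trans ha₂s.symm
    have heq : a₁ = a₂ := by
      rcases a₁ with ⟨i1, j1⟩
      rcases a₂ with ⟨i2, j2⟩
      dsimp only at hfst h
      subst hfst
      exact congrArg (Sigma.mk i1) (Fin.ext h)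
    obtain ⟨B, _, hBu⟩ := hpart.2 a₂
    exact hne ((hBu V₁ ⟨h1, heq ▸ ha₁⟩).trans (hBu V₂ ⟨h2, ha₂⟩).symm)
  · exact hne (aux_false hnc hresp hst h2 h1 (Ne.symm hne) hc1 ha₂ ha₂s hb₂ hb₂t ha₁ ha₁s hb₁ hb₁t
      (Or.inr ⟨ha₂s.trans ha₁s.symm, h⟩)).elim
end
end

section
/- Let r ≥ 2 and let n₁,…,n_r ≥ 1 be integers with n = n₁+⋯+n_r. Let π be a non-crossing partition of [n] without singleton blocks that respects the interval partition n₁⊗⋯⊗n_r with blocks B₁,…,B_r, where B_s = {b₁^s,…,b_{n_s}^s} listed in increasing order. Fix s ∈ {1,…,r−1} and suppose that the pair {b_{n_s}^s, b₁^{s+1}} (the last element of B_s together with the first element of B_{s+1}) is a block of π. If π has exactly ℓ ≥ 1 blocks of cardinality two linking B_s and B_{s+1}, then these ℓ blocks are precisely {b_{n_s}^s, b₁^{s+1}}, {b_{n_s−1}^s, b₂^{s+1}}, …, {b_{n_s−ℓ+1}^s, b_ℓ^{s+1}}. -/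
open MeasureTheory Filter Finset Topology
open scoped ENNReal

noncomputable section

section AuxNested

variable {r : ℕ} {n : Fin r → ℕ}

lemma aux_mlt_irrefl (a : MIdx n) : ¬ mlt a a := by
  simp [mlt]

lemma aux_mlt_trichot (a b : MIdx n) : mlt a b ∨ a = b ∨ mlt b a := by
  obtain ⟨a1, a2⟩ := a
  obtain ⟨b1, b2⟩ := b
  rcases lt_trichotomy a1 b1 with h | h | h
  · exact Or.inl (Or.inl h)
  · subst h
    rcases lt_trichotomy (a2 : ℕ) (b2 : ℕ) with h2 | h2 | h2
    · exact Or.inl (Or.inr ⟨rfl, h2⟩)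
    · exact Or.inr (Or.inl (by simp [Fin.ext_iff, h2]))
    · exact Or.inr (Or.inr (Or.inr ⟨rfl, h2⟩))
  · exact Or.inr (Or.inr (Or.inl h))

lemma aux_blockOf_mem {π : Finset (Finset (MIdx n))} (hpart : IsPartition π) (u : MIdx n) :
    blockOf π u ∈ π ∧ u ∈ blockOf π u := by
  obtain ⟨B, hB, -⟩ := hpart.2 u
  have h : ∃ B ∈ π, u ∈ B := ⟨B, hB.1, hB.2⟩
  rw [blockOf, dif_pos h]
  exact h.choose_spec

lemma aux_blockOf_eq {π : Finset (Finset (MIdx n))} (hpart : IsPartition π)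
    {W : Finset (MIdx n)} {u : MIdx n} (hW : W ∈ π) (hu : u ∈ W) : blockOf π u = W := by
  obtain ⟨B, hB, huniq⟩ := hpart.2 u
  have h1 := aux_blockOf_mem hpart u
  exact (huniq _ ⟨h1.1, h1.2⟩).trans (huniq W ⟨hW, hu⟩).symm

lemma aux_inner_label {s t : Fin r} (hst : (t : ℕ) = (s : ℕ) + 1)
    {as : Fin (n s)} {bt : Fin (n t)} {u : MIdx n}
    (hu1 : mlt ⟨s, as⟩ u) (hu2 : mlt u ⟨t, bt⟩) :
    (∃ x : Fin (n s), u = ⟨s, x⟩ ∧ (as : ℕ) < (x : ℕ)) ∨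
      (∃ j : Fin (n t), u = ⟨t, j⟩ ∧ (j : ℕ) < (bt : ℕ)) := by
  obtain ⟨u1, u2⟩ := u
  rcases hu1 with h | ⟨h, h'⟩
  · rcases hu2 with h2 | ⟨h2, h2'⟩
    · exfalso
      dsimp at h h2
      rw [Fin.lt_def] at h h2
      omega
    · dsimp at h2
      subst h2
      exact Or.inr ⟨u2, rfl, h2'⟩
  · dsimp at h h'
    subst h
    rcases hu2 with h2 | ⟨h2, _⟩
    · exact Or.inl ⟨u2, rfl, h'⟩
    · exfalso
      dsimp at h2
      rw [h2] at hst
      omega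

lemma aux_mk_ne {s t : Fin r} (hst : (t : ℕ) = (s : ℕ) + 1)
    (as : Fin (n s)) (bt : Fin (n t)) : (⟨s, as⟩ : MIdx n) ≠ ⟨t, bt⟩ := by
  intro h
  have := congrArg Sigma.fst h
  dsimp at this
  rw [this] at hst
  omega

lemma aux_V_eq
    {s t : Fin r} (hst : (t : ℕ) = (s : ℕ) + 1)
    {V : Finset (MIdx n)} (hV2 : V.card = 2)
    {as : Fin (n s)} {bt : Fin (n t)}
    (ha : (⟨s, as⟩ : MIdx n) ∈ V) (hb : (⟨t, bt⟩ : MIdx n) ∈ V) :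
    V = {⟨s, as⟩, ⟨t, bt⟩} := by
  have hne := aux_mk_ne (n := n) hst as bt
  refine (Finset.eq_of_subset_of_card_le ?_ ?_).symm
  · intro z hz
    rcases Finset.mem_insert.1 hz with rfl | hz
    · exact ha
    · rw [Finset.mem_singleton] at hz
      subst hz
      exact hb
  · rw [hV2, Finset.card_insert_of_notMem (by simp [hne]), Finset.card_singleton]

/-- The block of any element strictly between the two ends of a linking pair is itself
a linking pair strictly inside. -/
lemma aux_inner_pair {π : Finset (Finset (MIdx n))}
    (hpart : IsPartition π) (hns : NoSingletons π) (hnc : NonCrossing π) (hresp : Respects π)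
    {s t : Fin r} (hst : (t : ℕ) = (s : ℕ) + 1)
    {V : Finset (MIdx n)} (hV : V ∈ π) (hV2 : V.card = 2)
    {as : Fin (n s)} {bt : Fin (n t)}
    (ha : (⟨s, as⟩ : MIdx n) ∈ V) (hb : (⟨t, bt⟩ : MIdx n) ∈ V)
    {u : MIdx n} (hu1 : mlt ⟨s, as⟩ u) (hu2 : mlt u ⟨t, bt⟩) :
    ∃ (x : Fin (n s)) (j : Fin (n t)), (as : ℕ) < (x : ℕ) ∧ (j : ℕ) < (bt : ℕ) ∧
      blockOf π u = {⟨s, x⟩, ⟨t, j⟩} := by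
  have hVeq := aux_V_eq hst hV2 ha hb
  set W := blockOf π u with hWdef
  obtain ⟨hWπ, huW⟩ := aux_blockOf_mem hpart u
  have hWV : W ≠ V := by
    intro h
    have : u ∈ V := h ▸ huW
    rw [hVeq] at this
    rcases Finset.mem_insert.1 this with rfl | this
    · exact aux_mlt_irrefl _ hu1
    · rw [Finset.mem_singleton] at this
      subst this
      exact aux_mlt_irrefl _ hu2
  have hinner : ∀ w ∈ W, mlt ⟨s, as⟩ w ∧ mlt w ⟨t, bt⟩ := by
    intro w hw
    have hwa : w ≠ ⟨s, as⟩ := by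
      rintro rfl
      exact hWV (aux_blockOf_eq hpart hV ha ▸
        (aux_blockOf_eq hpart hWπ hw).symm ▸ rfl)
    have hwb : w ≠ ⟨t, bt⟩ := by
      rintro rfl
      exact hWV (aux_blockOf_eq hpart hV hb ▸
        (aux_blockOf_eq hpart hWπ hw).symm ▸ rfl)
    rcases aux_mlt_trichot w ⟨s, as⟩ with h1 | h1 | h1
    · exact absurd ⟨h1, hu1, hu2⟩ (hnc W hWπ V hV hWV w hw u huW ⟨s, as⟩ ha ⟨t, bt⟩ hb)
    · exact absurd h1 hwa
    · refine ⟨h1, ?_⟩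
      rcases aux_mlt_trichot w ⟨t, bt⟩ with h2 | h2 | h2
      · exact h2
      · exact absurd h2 hwb
      · exact absurd ⟨hu1, hu2, h2⟩
          (hnc V hV W hWπ (Ne.symm hWV) ⟨s, as⟩ ha ⟨t, bt⟩ hb u huW w hw)
  have hform : ∀ w ∈ W, (∃ x : Fin (n s), w = ⟨s, x⟩ ∧ (as : ℕ) < (x : ℕ)) ∨
      (∃ j : Fin (n t), w = ⟨t, j⟩ ∧ (j : ℕ) < (bt : ℕ)) := fun w hw =>
    aux_inner_label hst (hinner w hw).1 (hinner w hw).2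
  obtain ⟨w', hw'W, hw'u⟩ := Finset.exists_mem_ne
    (Nat.lt_of_lt_of_le one_lt_two (hns W hWπ)) u
  rcases hform u huW with ⟨x, hux, hxas⟩ | ⟨j, huj, hjbt⟩
  · rcases hform w' hw'W with ⟨x', hw'x, _⟩ | ⟨j, hw'j, hjbt⟩
    · exfalso
      exact hw'u (hresp W hWπ w' hw'W u huW (by rw [hw'x, hux]))
    · refine ⟨x, j, hxas, hjbt, ?_⟩
      apply Finset.Subset.antisymm
      · intro z hz
        rcases hform z hz with ⟨x', hzx, _⟩ | ⟨j', hzj, _⟩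
        · have : z = u := hresp W hWπ z hz u huW (by rw [hzx, hux])
          rw [this, hux]
          simp
        · have : z = w' := hresp W hWπ z hz w' hw'W (by rw [hzj, hw'j])
          rw [this, hw'j]
          simp
      · intro z hz
        rcases Finset.mem_insert.1 hz with rfl | hz
        · exact hux ▸ huW
        · rw [Finset.mem_singleton] at hz
          subst hz
          exact hw'j ▸ hw'W
  · rcases hform w' hw'W with ⟨x, hw'x, hxas⟩ | ⟨j', hw'j, _⟩
    · refine ⟨x, j, hxas, hjbt, ?_⟩
      apply Finset.Subset.antisymm
      · intro z hz
        rcases hform z hz with ⟨x', hzx, _⟩ | ⟨j', hzj, _⟩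
        · have : z = w' := hresp W hWπ z hz w' hw'W (by rw [hzx, hw'x])
          rw [this, hw'x]
          simp
        · have : z = u := hresp W hWπ z hz u huW (by rw [hzj, huj])
          rw [this, huj]
          simp
      · intro z hz
        rcases Finset.mem_insert.1 hz with rfl | hz
        · exact hw'x ▸ hw'W
        · rw [Finset.mem_singleton] at hz
          subst hz
          exact huj ▸ huW
    · exfalso
      exact hw'u (hresp W hWπ w' hw'W u huW (by rw [hw'j, huj]))

lemma aux_mlt_s_lt_t {s t : Fin r} (hst : (t : ℕ) = (s : ℕ) + 1)
    (as : Fin (n s)) (bt : Fin (n t)) : mlt (⟨s, as⟩ : MIdx n) ⟨t, bt⟩ :=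
  Or.inl (show s < t by rw [Fin.lt_def]; omega)

/-- The index equation for a linking pair: the indices are "mirrored". -/
lemma aux_index_eq {π : Finset (Finset (MIdx n))}
    (hpart : IsPartition π) (hns : NoSingletons π) (hnc : NonCrossing π) (hresp : Respects π)
    {s t : Fin r} (hst : (t : ℕ) = (s : ℕ) + 1)
    {V : Finset (MIdx n)} (hV : V ∈ π) (hV2 : V.card = 2)
    {as : Fin (n s)} {bt : Fin (n t)}
    (ha : (⟨s, as⟩ : MIdx n) ∈ V) (hb : (⟨t, bt⟩ : MIdx n) ∈ V) :
    (as : ℕ) + 1 + (bt : ℕ) = n s := by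
  classical
  set A := Finset.univ.filter (fun j : Fin (n t) => (j : ℕ) < (bt : ℕ)) with hA
  set B := Finset.univ.filter (fun x : Fin (n s) => (as : ℕ) < (x : ℕ)) with hB
  have hcardA : A.card = (bt : ℕ) := by
    rw [← Finset.card_range (bt : ℕ)]
    refine Finset.card_bij (fun (j : Fin (n t)) (_ : j ∈ A) => (j : ℕ)) ?_ ?_ ?_
    · intro a ha'
      rw [hA, Finset.mem_filter] at ha'
      exact Finset.mem_range.2 ha'.2
    · intro a₁ h₁ a₂ h₂ h
      exact Fin.ext h
    · intro b hb'
      rw [Finset.mem_range] at hb'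
      exact ⟨⟨b, lt_trans hb' bt.isLt⟩, by rw [hA, Finset.mem_filter]; exact ⟨Finset.mem_univ _, hb'⟩, rfl⟩
  have hcardB : B.card = n s - ((as : ℕ) + 1) := by
    rw [← Nat.card_Ico ((as : ℕ) + 1) (n s)]
    refine Finset.card_bij (fun (x : Fin (n s)) (_ : x ∈ B) => (x : ℕ)) ?_ ?_ ?_
    · intro a ha'
      rw [hB, Finset.mem_filter] at ha'
      exact Finset.mem_Ico.2 ⟨ha'.2, a.isLt⟩
    · intro a₁ h₁ a₂ h₂ h
      exact Fin.ext h
    · intro b hb'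
      rw [Finset.mem_Ico] at hb'
      exact ⟨⟨b, hb'.2⟩, by
        rw [hB, Finset.mem_filter]
        refine ⟨Finset.mem_univ _, ?_⟩
        show (as : ℕ) < b
        omega, rfl⟩
  -- the pairing functions
  have keyA : ∀ j : Fin (n t), (j : ℕ) < (bt : ℕ) →
      ∃ x : Fin (n s), (as : ℕ) < (x : ℕ) ∧
        blockOf π (⟨t, j⟩ : MIdx n) = {⟨s, x⟩, ⟨t, j⟩} := by
    intro j hj
    obtain ⟨x, j', hx, hj', hblk⟩ := aux_inner_pair hpart hns hnc hresp hst hV hV2 ha hb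
      (u := ⟨t, j⟩) (aux_mlt_s_lt_t hst as j) (Or.inr ⟨rfl, hj⟩)
    have hmem := (aux_blockOf_mem hpart (⟨t, j⟩ : MIdx n)).2
    rw [hblk] at hmem
    rcases Finset.mem_insert.1 hmem with h | h
    · exact absurd h.symm (aux_mk_ne hst x j)
    · rw [Finset.mem_singleton] at h
      have : j' = j := Fin.ext (congrArg (fun z : MIdx n => (z.2 : ℕ)) h).symm
      rw [this] at hblk
      exact ⟨x, hx, hblk⟩
  have keyB : ∀ x : Fin (n s), (as : ℕ) < (x : ℕ) →
      ∃ j : Fin (n t), (j : ℕ) < (bt : ℕ) ∧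
        blockOf π (⟨s, x⟩ : MIdx n) = {⟨s, x⟩, ⟨t, j⟩} := by
    intro x hx
    obtain ⟨x', j, hx', hj, hblk⟩ := aux_inner_pair hpart hns hnc hresp hst hV hV2 ha hb
      (u := ⟨s, x⟩) (Or.inr ⟨rfl, hx⟩) (aux_mlt_s_lt_t hst x bt)
    have hmem := (aux_blockOf_mem hpart (⟨s, x⟩ : MIdx n)).2
    rw [hblk] at hmem
    rcases Finset.mem_insert.1 hmem with h | h
    · have : x' = x := Fin.ext (congrArg (fun z : MIdx n => (z.2 : ℕ)) h).symm
      rw [this] at hblk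
      exact ⟨j, hj, hblk⟩
    · rw [Finset.mem_singleton] at h
      exact absurd h (aux_mk_ne hst x j)
  have hle1 : A.card ≤ B.card := by
    apply Finset.card_le_card_of_injOn
      (fun j => if h : ∃ x : Fin (n s), (as : ℕ) < (x : ℕ) ∧
        blockOf π (⟨t, j⟩ : MIdx n) = {⟨s, x⟩, ⟨t, j⟩} then h.choose else as)
    · intro j hj
      rw [Finset.mem_coe, hA, Finset.mem_filter] at hj
      have h := keyA j hj.2
      simp only [Finset.mem_coe]
      rw [dif_pos h, hB, Finset.mem_filter]
      exact ⟨Finset.mem_univ _, h.choose_spec.1⟩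
    · intro j₁ h₁ j₂ h₂ heq
      rw [Finset.mem_coe, hA, Finset.mem_filter] at h₁ h₂
      have k₁ := keyA j₁ h₁.2
      have k₂ := keyA j₂ h₂.2
      dsimp only at heq
      rw [dif_pos k₁, dif_pos k₂] at heq
      set x := k₁.choose with hxd
      have hx₁ : blockOf π (⟨t, j₁⟩ : MIdx n) = {⟨s, x⟩, ⟨t, j₁⟩} := k₁.choose_spec.2
      have hx₂ : blockOf π (⟨t, j₂⟩ : MIdx n) = {⟨s, x⟩, ⟨t, j₂⟩} := by
        have h2 := k₂.choose_spec.2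
        rw [← heq] at h2
        exact h2
      have hb₁ := aux_blockOf_mem hpart (⟨t, j₁⟩ : MIdx n)
      have hb₂ := aux_blockOf_mem hpart (⟨t, j₂⟩ : MIdx n)
      have hsx₁ : (⟨s, x⟩ : MIdx n) ∈ blockOf π (⟨t, j₁⟩ : MIdx n) := by
        rw [hx₁]; simp
      have hsx₂ : (⟨s, x⟩ : MIdx n) ∈ blockOf π (⟨t, j₂⟩ : MIdx n) := by
        rw [hx₂]; simp
      have hWW : blockOf π (⟨t, j₁⟩ : MIdx n) = blockOf π (⟨t, j₂⟩ : MIdx n) := by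
        rw [← aux_blockOf_eq hpart hb₁.1 hsx₁]
        exact aux_blockOf_eq hpart hb₂.1 hsx₂
      have : (⟨t, j₂⟩ : MIdx n) ∈ blockOf π (⟨t, j₁⟩ : MIdx n) := hWW ▸ hb₂.2
      have heq2 : (⟨t, j₁⟩ : MIdx n) = ⟨t, j₂⟩ :=
        hresp _ hb₁.1 _ hb₁.2 _ this rfl
      exact Fin.ext (congrArg (fun z : MIdx n => (z.2 : ℕ)) heq2)
  have hle2 : B.card ≤ A.card := by
    apply Finset.card_le_card_of_injOn
      (fun x => if h : ∃ j : Fin (n t), (j : ℕ) < (bt : ℕ) ∧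
        blockOf π (⟨s, x⟩ : MIdx n) = {⟨s, x⟩, ⟨t, j⟩} then h.choose else bt)
    · intro x hx
      rw [Finset.mem_coe, hB, Finset.mem_filter] at hx
      have h := keyB x hx.2
      simp only [Finset.mem_coe]
      rw [dif_pos h, hA, Finset.mem_filter]
      exact ⟨Finset.mem_univ _, h.choose_spec.1⟩
    · intro x₁ h₁ x₂ h₂ heq
      rw [Finset.mem_coe, hB, Finset.mem_filter] at h₁ h₂
      have k₁ := keyB x₁ h₁.2
      have k₂ := keyB x₂ h₂.2
      dsimp only at heq
      rw [dif_pos k₁, dif_pos k₂] at heq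
      set j := k₁.choose with hjd
      have hj₁ : blockOf π (⟨s, x₁⟩ : MIdx n) = {⟨s, x₁⟩, ⟨t, j⟩} := k₁.choose_spec.2
      have hj₂ : blockOf π (⟨s, x₂⟩ : MIdx n) = {⟨s, x₂⟩, ⟨t, j⟩} := by
        have h2 := k₂.choose_spec.2
        rw [← heq] at h2
        exact h2
      have hb₁ := aux_blockOf_mem hpart (⟨s, x₁⟩ : MIdx n)
      have hb₂ := aux_blockOf_mem hpart (⟨s, x₂⟩ : MIdx n)
      have hsx₁ : (⟨t, j⟩ : MIdx n) ∈ blockOf π (⟨s, x₁⟩ : MIdx n) := by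
        rw [hj₁]; simp
      have hsx₂ : (⟨t, j⟩ : MIdx n) ∈ blockOf π (⟨s, x₂⟩ : MIdx n) := by
        rw [hj₂]; simp
      have hWW : blockOf π (⟨s, x₁⟩ : MIdx n) = blockOf π (⟨s, x₂⟩ : MIdx n) := by
        rw [← aux_blockOf_eq hpart hb₁.1 hsx₁]
        exact aux_blockOf_eq hpart hb₂.1 hsx₂
      have : (⟨s, x₂⟩ : MIdx n) ∈ blockOf π (⟨s, x₁⟩ : MIdx n) := hWW ▸ hb₂.2
      have heq2 : (⟨s, x₁⟩ : MIdx n) = ⟨s, x₂⟩ :=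
        hresp _ hb₁.1 _ hb₁.2 _ this rfl
      exact Fin.ext (congrArg (fun z : MIdx n => (z.2 : ℕ)) heq2)
  have := as.isLt
  omega

end AuxNested

open scoped Classical in
/-- if the pair `{last of B_s, first of B_{s+1}}` is a block of a
non-crossing respecting partition without singletons, and exactly `ℓ ≥ 1` blocks of
cardinality two link `B_s` and `B_{s+1}`, then these are precisely the nested pairs
`{b^s_{n_s - i}, b^{s+1}_{i+1}}`, `i = 0, …, ℓ - 1`. -/
theorem pair_blocks_linking_adjacent_are_nested
    (r : ℕ) (hr : 2 ≤ r) (n : Fin r → ℕ) (hn : ∀ i, 1 ≤ n i)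
    (π : Finset (Finset (MIdx n)))
    (hpart : IsPartition π) (hns : NoSingletons π) (hnc : NonCrossing π) (hresp : Respects π)
    (s t : Fin r) (hst : (t : ℕ) = (s : ℕ) + 1)
    (hpair : ∃ V ∈ π, V.card = 2 ∧
      (∃ a ∈ V, a.1 = s ∧ (a.2 : ℕ) + 1 = n s) ∧ (∃ b ∈ V, b.1 = t ∧ (b.2 : ℕ) = 0))
    (ℓ : ℕ) (hℓ : 1 ≤ ℓ)
    (hcard : (π.filter (fun V => V.card = 2 ∧
        (∃ a ∈ V, a.1 = s) ∧ (∃ b ∈ V, b.1 = t))).card = ℓ) :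
    ∀ V ∈ π,
      ((V.card = 2 ∧ (∃ a ∈ V, a.1 = s) ∧ (∃ b ∈ V, b.1 = t)) ↔
        (∃ i : ℕ, i < ℓ ∧ V.card = 2 ∧
          (∃ a ∈ V, a.1 = s ∧ (a.2 : ℕ) + 1 + i = n s) ∧
          (∃ b ∈ V, b.1 = t ∧ (b.2 : ℕ) = i))) := by
  classical
  intro V hV
  constructor
  · rintro ⟨hV2, ⟨a, haV, has⟩, ⟨b, hbV, hbt⟩⟩
    obtain ⟨a1, a2⟩ := a
    dsimp at has
    subst has
    obtain ⟨b1, b2⟩ := b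
    dsimp at hbt
    subst hbt
    refine ⟨(b2 : ℕ), ?_, hV2, ⟨⟨a1, a2⟩, haV, rfl, ?_⟩, ⟨⟨b1, b2⟩, hbV, rfl, rfl⟩⟩
    · -- the bound (b2 : ℕ) < ℓ
      rw [← hcard]
      set f : ℕ → Finset (MIdx n) := fun j =>
        if h : j < n b1 then blockOf π ⟨b1, ⟨j, h⟩⟩ else (∅ : Finset (MIdx n)) with hf
      have hmaps : ∀ j ∈ Finset.range ((b2 : ℕ) + 1),
          f j ∈ π.filter (fun V => V.card = 2 ∧
            (∃ a ∈ V, a.1 = a1) ∧ (∃ b ∈ V, b.1 = b1)) := by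
        intro j hj
        have hj' : j ≤ (b2 : ℕ) := Nat.lt_succ_iff.1 (Finset.mem_range.1 hj)
        have hjt : j < n b1 := lt_of_le_of_lt hj' b2.isLt
        rw [hf]
        dsimp only
        rw [dif_pos hjt]
        rcases lt_or_eq_of_le hj' with hlt | heq2
        · obtain ⟨x, j', hx, hj'', hblk⟩ := aux_inner_pair hpart hns hnc hresp hst hV hV2
            haV hbV (u := ⟨b1, ⟨j, hjt⟩⟩) (aux_mlt_s_lt_t hst a2 ⟨j, hjt⟩)
            (Or.inr ⟨rfl, hlt⟩)
          refine Finset.mem_filter.2 ⟨(aux_blockOf_mem hpart _).1, ?_, ?_, ?_⟩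
          · rw [hblk, Finset.card_insert_of_notMem (by simp [aux_mk_ne hst x j']),
              Finset.card_singleton]
          · exact ⟨⟨a1, x⟩, by rw [hblk]; simp, rfl⟩
          · exact ⟨⟨b1, j'⟩, by rw [hblk]; simp, rfl⟩
        · have hfin : (⟨j, hjt⟩ : Fin (n b1)) = b2 := Fin.ext heq2
          rw [hfin, aux_blockOf_eq hpart hV hbV]
          exact Finset.mem_filter.2 ⟨hV, hV2, ⟨⟨a1, a2⟩, haV, rfl⟩, ⟨⟨b1, b2⟩, hbV, rfl⟩⟩
      have hinj : Set.InjOn f (Finset.range ((b2 : ℕ) + 1)) := by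
        intro j₁ h₁ j₂ h₂ heq
        rw [Finset.mem_coe, Finset.mem_range] at h₁ h₂
        have h₁t : j₁ < n b1 := lt_of_le_of_lt (Nat.lt_succ_iff.1 h₁) b2.isLt
        have h₂t : j₂ < n b1 := lt_of_le_of_lt (Nat.lt_succ_iff.1 h₂) b2.isLt
        rw [hf] at heq
        dsimp only at heq
        rw [dif_pos h₁t, dif_pos h₂t] at heq
        have hm₁ := aux_blockOf_mem hpart (⟨b1, ⟨j₁, h₁t⟩⟩ : MIdx n)
        have hm₂ := aux_blockOf_mem hpart (⟨b1, ⟨j₂, h₂t⟩⟩ : MIdx n)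
        have : (⟨b1, ⟨j₂, h₂t⟩⟩ : MIdx n) ∈ blockOf π (⟨b1, ⟨j₁, h₁t⟩⟩ : MIdx n) :=
          heq ▸ hm₂.2
        have heq2 : (⟨b1, ⟨j₁, h₁t⟩⟩ : MIdx n) = ⟨b1, ⟨j₂, h₂t⟩⟩ :=
          hresp _ hm₁.1 _ hm₁.2 _ this rfl
        exact congrArg (fun z : MIdx n => (z.2 : ℕ)) heq2
      calc (b2 : ℕ) < (b2 : ℕ) + 1 := Nat.lt_succ_self _
        _ = (Finset.range ((b2 : ℕ) + 1)).card := (Finset.card_range _).symm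
        _ ≤ _ := Finset.card_le_card_of_injOn f hmaps hinj
    · exact aux_index_eq hpart hns hnc hresp hst hV hV2 haV hbV
  · rintro ⟨i, hiℓ, hV2, ⟨a, haV, has, -⟩, ⟨b, hbV, hbt, -⟩⟩
    exact ⟨hV2, ⟨a, haV, has⟩, ⟨b, hbV, hbt⟩⟩
end
end

section
/- Let n, m ≥ 1 and let f ∈ L²(ℝ₊ⁿ) and g ∈ L²(ℝ₊ᵐ) be mirror-symmetric functions that are bounded with bounded support. Let p ∈ {0,1} and ℓ ≥ 0 be integers with 1 ≤ ℓ+p ≤ min(n,m) and ℓ ≤ min(n,m) − p. Then the squared L²(ℝ₊^{n+m−2ℓ−p}) norm of f ⋆_{ℓ+p}^{ℓ} g equals the L²(ℝ₊^{2ℓ+p}) inner product of f ⋆_{n−ℓ}^{n−ℓ−p} f and g ⋆_{m−ℓ}^{m−ℓ−p} g; that is, ‖f ⋆_{ℓ+p}^{ℓ} g‖²_{L²(ℝ₊^{n+m−2ℓ−p})} = ⟨f ⋆_{n−ℓ}^{n−ℓ−p} f, g ⋆_{m−ℓ}^{m−ℓ−p} g⟩_{L²(ℝ₊^{2ℓ+p})}.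 -/
open MeasureTheory Filter Finset Topology
open scoped ENNReal

noncomputable section

open scoped Classical

/-- The base measure: Lebesgue measure restricted to `[0, ∞)`. -/
def nu : Measure ℝ := volume.restrict (Set.Ici 0)

instance : SigmaFinite nu := by unfold nu; infer_instance

/-- Product measure on `ℝ₊^k`. -/
def pim (k : ℕ) : Measure (Fin k → ℝ) := Measure.pi fun _ => nu

instance (k : ℕ) : SigmaFinite (pim k) := by unfold pim; infer_instance

lemma orth_eq_pi (k : ℕ) : orth (Fin k) = Set.pi Set.univ (fun _ => Set.Ici (0:ℝ)) := by
  ext t; simp only [orth, Set.mem_setOf_eq, Set.mem_pi, Set.mem_univ, Set.mem_Ici, true_implies]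

lemma restrict_orth (k : ℕ) : volume.restrict (orth (Fin k)) = pim k := by
  rw [orth_eq_pi, volume_pi]
  refine Eq.symm (Measure.pi_eq fun s hs => ?_)
  rw [Measure.restrict_apply (MeasurableSet.univ_pi hs), ← Set.pi_inter_distrib,
    Measure.pi_pi]
  simp [nu, Measure.restrict_apply (hs _)]


/-! ### Merging and permutation equivalences -/

/-- The merging measurable equivalence `ℝ^a × ℝ^b ≃ ℝ^N` when `a + b = N`. -/
def mEq (a b N : ℕ) (h : a + b = N) : ((Fin a → ℝ) × (Fin b → ℝ)) ≃ᵐ (Fin N → ℝ) :=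
  (MeasurableEquiv.sumPiEquivProdPi (fun _ : Fin a ⊕ Fin b => ℝ)).symm.trans
    ((MeasurableEquiv.piCongrLeft (fun _ : Fin (a + b) => ℝ) finSumFinEquiv).trans
      (MeasurableEquiv.piCongrLeft (fun _ : Fin N => ℝ) (finCongr h)))

lemma mEq_mp (a b N : ℕ) (h : a + b = N) :
    MeasurePreserving (mEq a b N h) ((pim a).prod (pim b)) (pim N) := by
  exact ((measurePreserving_piCongrLeft (fun _ : Fin N => nu) (finCongr h)).comp
    ((measurePreserving_piCongrLeft (fun _ : Fin (a + b) => nu) finSumFinEquiv).comp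
      (measurePreserving_sumPiEquivProdPi_symm (fun _ => nu))))

lemma mEq_eval (a b N : ℕ) (h : a + b = N) (q : (Fin a → ℝ) × (Fin b → ℝ)) :
    mEq a b N h q =
      (MeasurableEquiv.piCongrLeft (fun _ : Fin N => ℝ) (finCongr h))
        ((MeasurableEquiv.piCongrLeft (fun _ : Fin (a + b) => ℝ) finSumFinEquiv)
          ((MeasurableEquiv.sumPiEquivProdPi (fun _ : Fin a ⊕ Fin b => ℝ)).symm q)) := rfl

lemma mEq_apply_lt {a b N : ℕ} (h : a + b = N) (x : Fin a → ℝ) (y : Fin b → ℝ)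
    (j : Fin N) (hj : (j : ℕ) < a) : mEq a b N h (x, y) j = x ⟨j, hj⟩ := by
  have hj0 : j = (finCongr h) (finSumFinEquiv (Sum.inl (⟨j, hj⟩ : Fin a))) := by
    apply Fin.ext; simp
  rw [mEq_eval]
  conv_lhs => rw [hj0]
  rw [MeasurableEquiv.piCongrLeft_apply_apply, MeasurableEquiv.coe_piCongrLeft,
    MeasurableEquiv.coe_sumPiEquivProdPi_symm]
  exact Equiv.piCongrLeft_sumInl (fun _ => ℝ) finSumFinEquiv x y ⟨j, hj⟩

lemma mEq_apply_ge {a b N : ℕ} (h : a + b = N) (x : Fin a → ℝ) (y : Fin b → ℝ)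
    (j : Fin N) (hj : a ≤ (j : ℕ)) :
    mEq a b N h (x, y) j = y ⟨(j : ℕ) - a, by omega⟩ := by
  have hj0 : j = (finCongr h) (finSumFinEquiv (Sum.inr (⟨(j : ℕ) - a, by omega⟩ : Fin b))) := by
    apply Fin.ext; simp; omega
  rw [mEq_eval]
  conv_lhs => rw [hj0]
  rw [MeasurableEquiv.piCongrLeft_apply_apply, MeasurableEquiv.coe_piCongrLeft,
    MeasurableEquiv.coe_sumPiEquivProdPi_symm]
  exact Equiv.piCongrLeft_sumInr (fun _ => ℝ) finSumFinEquiv x y _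

lemma ext_mEq {a b N : ℕ} (h : a + b = N) (x : Fin a → ℝ) (y : Fin b → ℝ) (j : ℕ) :
    ext (mEq a b N h (x, y)) j = if j < a then ext x j else ext y (j - a) := by
  unfold _root_.ext
  by_cases hN : j < N
  · rw [dif_pos hN]
    by_cases ha : j < a
    · rw [if_pos ha, mEq_apply_lt h x y _ ha, dif_pos ha]
    · rw [if_neg ha]
      have h2 := mEq_apply_ge h x y ⟨j, hN⟩ (by simpa using by omega)
      simp only [Fin.val_mk] at h2
      rw [h2, dif_pos (by omega)]
  · rw [dif_neg hN, if_neg (by omega), dif_neg (by omega)]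

/-- Precomposition with a permutation of indices, as a measurable equivalence. -/
def pEq (N : ℕ) (e : Fin N ≃ Fin N) : (Fin N → ℝ) ≃ᵐ (Fin N → ℝ) :=
  MeasurableEquiv.piCongrLeft (fun _ : Fin N => ℝ) e

lemma pEq_mp (N : ℕ) (e : Fin N ≃ Fin N) : MeasurePreserving (pEq N e) (pim N) (pim N) :=
  measurePreserving_piCongrLeft (fun _ => nu) e

lemma pEq_apply (N : ℕ) (e : Fin N ≃ Fin N) (x : Fin N → ℝ) (j : Fin N) :
    pEq N e x j = x (e.symm j) := by
  conv_lhs => rw [show j = e (e.symm j) by simp]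
  exact MeasurableEquiv.piCongrLeft_apply_apply (β := fun _ : Fin N => ℝ) e x (e.symm j)

/-! ### Coordinate selections are quasi measure preserving -/

lemma qmp_sel {n N : ℕ} (τ : Fin n → Fin N) (hτ : Function.Injective τ) :
    Measure.QuasiMeasurePreserving (fun (x : Fin N → ℝ) (j : Fin n) => x (τ j))
      (pim N) (pim n) := by
  classical
  set p : Fin N → Prop := fun i => ∃ j, τ j = i with hp
  have mp₁ := measurePreserving_piEquivPiSubtypeProd (fun _ : Fin N => nu) p
  set e0 : Subtype p ≃ Fin n := (Equiv.ofInjective τ hτ).symm with he0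
  have comp := ((measurePreserving_piCongrLeft (fun _ : Fin n => nu) e0).quasiMeasurePreserving.comp
    (Measure.quasiMeasurePreserving_fst.comp mp₁.quasiMeasurePreserving))
  have heq : (fun (x : Fin N → ℝ) (j : Fin n) => x (τ j)) =
      (MeasurableEquiv.piCongrLeft (fun _ : Fin n => ℝ) e0) ∘ Prod.fst ∘
        (MeasurableEquiv.piEquivPiSubtypeProd (fun _ : Fin N => ℝ) p) := by
    funext x
    funext j
    show x (τ j) = (MeasurableEquiv.piCongrLeft (fun _ : Fin n => ℝ) e0)
      (fun i : Subtype p => x i) j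
    conv_rhs => rw [show j = e0 (e0.symm j) from (e0.apply_symm_apply j).symm]
    rw [MeasurableEquiv.piCongrLeft_apply_apply]
    have hcoe : ((e0.symm j : Subtype p) : Fin N) = τ j := by
      rw [he0]; rfl
    rw [hcoe]
  rw [heq]
  exact comp

lemma sel_aesm {n N : ℕ} {f : (Fin n → ℝ) → ℂ}
    (hf : AEStronglyMeasurable f (pim n)) {τ : Fin n → Fin N} (hτ : Function.Injective τ) :
    AEStronglyMeasurable (fun x : Fin N → ℝ => f (fun j => x (τ j))) (pim N) :=
  hf.comp_quasiMeasurePreserving (qmp_sel τ hτ)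

lemma sel_ae {n N : ℕ} {P : (Fin n → ℝ) → Prop}
    (hP : ∀ᵐ t ∂(pim n), P t) {τ : Fin n → Fin N} (hτ : Function.Injective τ) :
    ∀ᵐ x ∂(pim N), P (fun j => x (τ j)) :=
  (qmp_sel τ hτ).ae hP

/-! ### Expansion of the contraction `starpC` -/

lemma ext_lt {k : ℕ} (t : Fin k → ℝ) {j : ℕ} (h : j < k) : ext t j = t ⟨j, h⟩ := dif_pos h

lemma ext_ge {k : ℕ} (t : Fin k → ℝ) {j : ℕ} (h : ¬ j < k) : ext t j = 0 := dif_neg h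

lemma ext_extFun {D k : ℕ} (h : D = k) (t : Fin k → ℝ) :
    ext (fun j : Fin D => ext t (j : ℕ)) = ext t := by
  subst h
  funext jj
  unfold _root_.ext
  by_cases hj : jj < D
  · rw [dif_pos hj]
  · rw [dif_neg hj, dif_neg hj]

lemma starpC_expand (n m ℓ p : ℕ) (hp : p ≤ 1) (hn : ℓ + p ≤ n) (hm : ℓ + p ≤ m)
    (f : (Fin n → ℝ) → ℂ) (g : (Fin m → ℝ) → ℂ) (t : Fin (n + m - 2*ℓ - p) → ℝ) :
    starpC n m ℓ p f g t =
      ∫ s in orth (Fin ℓ),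
        f (fun j => if (j:ℕ) < n - ℓ then ext t (j:ℕ) else ext s ((j:ℕ) - (n - ℓ))) *
        g (fun j => if (j:ℕ) < ℓ then ext s (ℓ - 1 - (j:ℕ))
            else ext t (n - ℓ - p + ((j:ℕ) - ℓ))) := by
  interval_cases p
  · simp only [starpC, arcC, eq_self_iff_true, if_true]
    rw [ext_extFun (show n + m - 2*ℓ = n + m - 2*ℓ - 0 from rfl) t]
    rfl
  · simp only [starpC, starC, if_neg one_ne_zero]
    rw [ext_extFun (show n + m - 2*(ℓ+1) + 1 = n + m - 2*ℓ - 1 by omega) t]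
    have e1 : n - (ℓ + 1) + 1 = n - ℓ := by omega
    have e2 : n - (ℓ + 1) = n - ℓ - 1 := by omega
    have e3 : ℓ + 1 - 1 = ℓ := by omega
    rw [e1, e2, e3]

/-! ### The selection maps -/

section Main

variable (n m ℓ p : ℕ)

/-- first `f`-factor on the left side: `f(a, r, s)`. -/
def tau1 (hn : ℓ + p ≤ n) (hm : ℓ + p ≤ m) (hp : p ≤ 1) : Fin n → Fin (n + m - p) :=
  fun j => ⟨if (j:ℕ) < n - ℓ then (j:ℕ) else n + m - 2*ℓ - p + ((j:ℕ) - (n - ℓ)),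
    by split_ifs <;> omega⟩

/-- second (conjugated) `f`-factor on the left side: `f(a, r, s')`. -/
def tau2 (hn : ℓ + p ≤ n) (hm : ℓ + p ≤ m) (hp : p ≤ 1) : Fin n → Fin (n + m - p) :=
  fun j => ⟨if (j:ℕ) < n - ℓ then (j:ℕ) else n + m - 2*ℓ - p + ℓ + ((j:ℕ) - (n - ℓ)),
    by split_ifs <;> omega⟩

/-- first `g`-factor on the left side: `g(rev s, r, b)`. -/
def tau3 (hn : ℓ + p ≤ n) (hm : ℓ + p ≤ m) (hp : p ≤ 1) : Fin m → Fin (n + m - p) :=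
  fun j => ⟨if (j:ℕ) < ℓ then n + m - 2*ℓ - p + (ℓ - 1 - (j:ℕ))
      else n - ℓ - p + ((j:ℕ) - ℓ), by split_ifs <;> omega⟩

/-- second (conjugated) `g`-factor on the left side: `g(rev s', r, b)`. -/
def tau4 (hn : ℓ + p ≤ n) (hm : ℓ + p ≤ m) (hp : p ≤ 1) : Fin m → Fin (n + m - p) :=
  fun j => ⟨if (j:ℕ) < ℓ then n + m - 2*ℓ - p + ℓ + (ℓ - 1 - (j:ℕ))
      else n - ℓ - p + ((j:ℕ) - ℓ), by split_ifs <;> omega⟩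

/-- first `f`-factor on the right side: `f(c, r, v)`. -/
def sig1 (hn : ℓ + p ≤ n) (hm : ℓ + p ≤ m) (hp : p ≤ 1) : Fin n → Fin (n + m - p) :=
  fun j => ⟨if (j:ℕ) < ℓ + p then (j:ℕ) else 2*ℓ + p + ((j:ℕ) - (ℓ + p)),
    by split_ifs <;> omega⟩

/-- second `f`-factor on the right side: `f(rev v, r, d)`. -/
def sig2 (hn : ℓ + p ≤ n) (hm : ℓ + p ≤ m) (hp : p ≤ 1) : Fin n → Fin (n + m - p) :=
  fun j => ⟨if (j:ℕ) < n - ℓ - p then 2*ℓ + p + (n - ℓ - p - 1 - (j:ℕ))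
      else ℓ + ((j:ℕ) - (n - ℓ - p)), by split_ifs <;> omega⟩

/-- first `g`-factor on the right side: `g(c, r, w)`. -/
def sig3 (hn : ℓ + p ≤ n) (hm : ℓ + p ≤ m) (hp : p ≤ 1) : Fin m → Fin (n + m - p) :=
  fun j => ⟨if (j:ℕ) < ℓ + p then (j:ℕ) else 2*ℓ + p + (n - ℓ - p) + ((j:ℕ) - (ℓ + p)),
    by split_ifs <;> omega⟩

/-- second `g`-factor on the right side: `g(rev w, r, d)`. -/
def sig4 (hn : ℓ + p ≤ n) (hm : ℓ + p ≤ m) (hp : p ≤ 1) : Fin m → Fin (n + m - p) :=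
  fun j => ⟨if (j:ℕ) < m - ℓ - p then 2*ℓ + p + (n - ℓ - p) + (m - ℓ - p - 1 - (j:ℕ))
      else ℓ + ((j:ℕ) - (m - ℓ - p)), by split_ifs <;> omega⟩

variable {n m ℓ p} (hn : ℓ + p ≤ n) (hm : ℓ + p ≤ m) (hp : p ≤ 1)

lemma tau1_inj : Function.Injective (tau1 n m ℓ p hn hm hp) := by
  intro a b hab
  simp only [tau1, Fin.mk.injEq] at hab
  apply Fin.ext
  split_ifs at hab <;> omega

lemma tau2_inj : Function.Injective (tau2 n m ℓ p hn hm hp) := by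
  intro a b hab
  simp only [tau2, Fin.mk.injEq] at hab
  apply Fin.ext
  split_ifs at hab <;> omega

lemma tau3_inj : Function.Injective (tau3 n m ℓ p hn hm hp) := by
  intro a b hab
  simp only [tau3, Fin.mk.injEq] at hab
  apply Fin.ext
  split_ifs at hab <;> omega

lemma tau4_inj : Function.Injective (tau4 n m ℓ p hn hm hp) := by
  intro a b hab
  simp only [tau4, Fin.mk.injEq] at hab
  apply Fin.ext
  split_ifs at hab <;> omega

lemma sig1_inj : Function.Injective (sig1 n m ℓ p hn hm hp) := by
  intro a b hab
  simp only [sig1, Fin.mk.injEq] at hab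
  apply Fin.ext
  split_ifs at hab <;> omega

lemma sig2_inj : Function.Injective (sig2 n m ℓ p hn hm hp) := by
  intro a b hab
  simp only [sig2, Fin.mk.injEq] at hab
  apply Fin.ext
  split_ifs at hab <;> omega

lemma sig3_inj : Function.Injective (sig3 n m ℓ p hn hm hp) := by
  intro a b hab
  simp only [sig3, Fin.mk.injEq] at hab
  apply Fin.ext
  split_ifs at hab <;> omega

lemma sig4_inj : Function.Injective (sig4 n m ℓ p hn hm hp) := by
  intro a b hab
  simp only [sig4, Fin.mk.injEq] at hab
  apply Fin.ext
  split_ifs at hab <;> omega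

lemma tau_cover (i : Fin (n + m - p)) :
    (∃ j, tau1 n m ℓ p hn hm hp j = i) ∨ (∃ j, tau3 n m ℓ p hn hm hp j = i) ∨
      (∃ j, tau2 n m ℓ p hn hm hp j = i) ∨ (∃ j, tau4 n m ℓ p hn hm hp j = i) := by
  by_cases h1 : (i:ℕ) < n - ℓ
  · exact Or.inl ⟨⟨(i:ℕ), by omega⟩, by apply Fin.ext; simp only [tau1]; rw [if_pos (by omega)]⟩
  by_cases h2 : (i:ℕ) < n + m - 2*ℓ - p
  · refine Or.inr (Or.inl ⟨⟨ℓ + ((i:ℕ) - (n - ℓ - p)), by omega⟩, ?_⟩)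
    apply Fin.ext; simp only [tau3]; rw [if_neg (by omega)]; omega
  by_cases h3 : (i:ℕ) < n + m - 2*ℓ - p + ℓ
  · refine Or.inl ⟨⟨n - ℓ + ((i:ℕ) - (n + m - 2*ℓ - p)), by omega⟩, ?_⟩
    apply Fin.ext; simp only [tau1]; rw [if_neg (by omega)]; omega
  · refine Or.inr (Or.inr (Or.inl ⟨⟨n - ℓ + ((i:ℕ) - (n + m - 2*ℓ - p + ℓ)), by omega⟩, ?_⟩))
    apply Fin.ext; simp only [tau2]; rw [if_neg (by omega)]; omega

lemma sig_cover (i : Fin (n + m - p)) :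
    (∃ j, sig1 n m ℓ p hn hm hp j = i) ∨ (∃ j, sig2 n m ℓ p hn hm hp j = i) ∨
      (∃ j, sig3 n m ℓ p hn hm hp j = i) ∨ (∃ j, sig4 n m ℓ p hn hm hp j = i) := by
  by_cases h1 : (i:ℕ) < ℓ + p
  · exact Or.inl ⟨⟨(i:ℕ), by omega⟩, by apply Fin.ext; simp only [sig1]; rw [if_pos (by omega)]⟩
  by_cases h2 : (i:ℕ) < 2*ℓ + p
  · refine Or.inr (Or.inl ⟨⟨n - ℓ - p + ((i:ℕ) - ℓ), by omega⟩, ?_⟩)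
    apply Fin.ext; simp only [sig2]; rw [if_neg (by omega)]; omega
  by_cases h3 : (i:ℕ) < 2*ℓ + p + (n - ℓ - p)
  · refine Or.inl ⟨⟨ℓ + p + ((i:ℕ) - (2*ℓ + p)), by omega⟩, ?_⟩
    apply Fin.ext; simp only [sig1]; rw [if_neg (by omega)]; omega
  · refine Or.inr (Or.inr (Or.inl ⟨⟨ℓ + p + ((i:ℕ) - (2*ℓ + p + (n - ℓ - p))), by omega⟩, ?_⟩))
    apply Fin.ext; simp only [sig3]; rw [if_neg (by omega)]; omega

end Main

section Main2

lemma bigX_app {K a b N : ℕ} (hKN : K + (a + b) = N) (t : Fin K → ℝ) (s : Fin a → ℝ)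
    (s' : Fin b → ℝ) (i : Fin N) :
    mEq K (a + b) N hKN (t, mEq a b (a + b) rfl (s, s')) i =
      if (i:ℕ) < K then ext t (i:ℕ)
      else if (i:ℕ) < K + a then ext s ((i:ℕ) - K) else ext s' ((i:ℕ) - K - a) := by
  have h0 : mEq K (a + b) N hKN (t, mEq a b (a + b) rfl (s, s')) i =
      ext (mEq K (a + b) N hKN (t, mEq a b (a + b) rfl (s, s'))) (i:ℕ) :=
    (ext_lt _ i.isLt).symm
  rw [h0, ext_mEq, ext_mEq]
  by_cases h1 : (i:ℕ) < K
  · rw [if_pos h1, if_pos h1]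
  · rw [if_neg h1, if_neg h1]
    by_cases h2 : (i:ℕ) - K < a
    · rw [if_pos h2, if_pos (by omega)]
    · rw [if_neg h2, if_neg (by omega), Nat.sub_sub]

variable {n m ℓ p : ℕ} (hn : ℓ + p ≤ n) (hm : ℓ + p ≤ m) (hp : p ≤ 1)

/-- forward map of the layout permutation, at the level of `ℕ`. -/
def pfwd (n m ℓ p j : ℕ) : ℕ :=
  if j < ℓ then n + m - 2*ℓ - p + ℓ + (ℓ - 1 - j)
  else if j < ℓ + p then n - ℓ - p + (j - ℓ)
  else if j < 2*ℓ + p then n + m - 2*ℓ - p + (j - (ℓ + p))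
  else if j < 2*ℓ + p + (n - ℓ - p) then n - ℓ - p - 1 - (j - (2*ℓ + p))
  else n - ℓ + (j - (2*ℓ + p + (n - ℓ - p)))

/-- inverse map of the layout permutation, at the level of `ℕ`. -/
def pinv (n m ℓ p j : ℕ) : ℕ :=
  if j < n - ℓ - p then 2*ℓ + p + (n - ℓ - p - 1 - j)
  else if j < n - ℓ then ℓ + (j - (n - ℓ - p))
  else if j < n + m - 2*ℓ - p then 2*ℓ + p + (n - ℓ - p) + (j - (n - ℓ))
  else if j < n + m - 2*ℓ - p + ℓ then ℓ + p + (j - (n + m - 2*ℓ - p))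
  else ℓ - 1 - (j - (n + m - 2*ℓ - p + ℓ))

lemma pfwd_lt {n m ℓ p : ℕ} (hn : ℓ + p ≤ n) (hm : ℓ + p ≤ m) (hp : p ≤ 1) {j : ℕ}
    (hj : j < n + m - p) : pfwd n m ℓ p j < n + m - p := by
  unfold pfwd; split_ifs <;> omega

lemma pinv_lt {n m ℓ p : ℕ} (hn : ℓ + p ≤ n) (hm : ℓ + p ≤ m) (hp : p ≤ 1) {j : ℕ}
    (hj : j < n + m - p) : pinv n m ℓ p j < n + m - p := by
  unfold pinv; split_ifs <;> omega

lemma pinv_pfwd {n m ℓ p : ℕ} (hn : ℓ + p ≤ n) (hm : ℓ + p ≤ m) (hp : p ≤ 1) {j : ℕ}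
    (hj : j < n + m - p) : pinv n m ℓ p (pfwd n m ℓ p j) = j := by
  unfold pfwd pinv; split_ifs <;> omega

lemma pfwd_pinv {n m ℓ p : ℕ} (hn : ℓ + p ≤ n) (hm : ℓ + p ≤ m) (hp : p ≤ 1) {j : ℕ}
    (hj : j < n + m - p) : pfwd n m ℓ p (pinv n m ℓ p j) = j := by
  unfold pfwd pinv; split_ifs <;> omega

/-- The permutation relating the two layouts. -/
def sigP (hn : ℓ + p ≤ n) (hm : ℓ + p ≤ m) (hp : p ≤ 1) :
    Fin (n + m - p) ≃ Fin (n + m - p) where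
  toFun j := ⟨pfwd n m ℓ p (j:ℕ), pfwd_lt hn hm hp j.isLt⟩
  invFun j := ⟨pinv n m ℓ p (j:ℕ), pinv_lt hn hm hp j.isLt⟩
  left_inv := fun j => Fin.ext (pinv_pfwd hn hm hp j.isLt)
  right_inv := fun j => Fin.ext (pfwd_pinv hn hm hp j.isLt)

lemma selL1 (hKN : n + m - 2*ℓ - p + (ℓ + ℓ) = n + m - p)
    (t : Fin (n + m - 2*ℓ - p) → ℝ) (s s' : Fin ℓ → ℝ) :
    (fun j : Fin n => mEq (n + m - 2*ℓ - p) (ℓ + ℓ) (n + m - p) hKN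
        (t, mEq ℓ ℓ (ℓ + ℓ) rfl (s, s')) (tau1 n m ℓ p hn hm hp j)) =
      fun j : Fin n => if (j:ℕ) < n - ℓ then ext t (j:ℕ) else ext s ((j:ℕ) - (n - ℓ)) := by
  funext j
  rw [bigX_app]
  by_cases hj : (j:ℕ) < n - ℓ
  · have hv : ((tau1 n m ℓ p hn hm hp j : Fin (n + m - p)) : ℕ) = (j:ℕ) := by
      simp only [tau1]; rw [if_pos hj]
    rw [hv, if_pos (by omega), if_pos hj]
  · have hv : ((tau1 n m ℓ p hn hm hp j : Fin (n + m - p)) : ℕ) =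
        n + m - 2*ℓ - p + ((j:ℕ) - (n - ℓ)) := by
      simp only [tau1]; rw [if_neg hj]
    rw [hv, if_neg (by omega), if_pos (by omega), if_neg hj]
    congr 1
    omega

lemma selL2 (hKN : n + m - 2*ℓ - p + (ℓ + ℓ) = n + m - p)
    (t : Fin (n + m - 2*ℓ - p) → ℝ) (s s' : Fin ℓ → ℝ) :
    (fun j : Fin n => mEq (n + m - 2*ℓ - p) (ℓ + ℓ) (n + m - p) hKN
        (t, mEq ℓ ℓ (ℓ + ℓ) rfl (s, s')) (tau2 n m ℓ p hn hm hp j)) =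
      fun j : Fin n => if (j:ℕ) < n - ℓ then ext t (j:ℕ) else ext s' ((j:ℕ) - (n - ℓ)) := by
  funext j
  rw [bigX_app]
  by_cases hj : (j:ℕ) < n - ℓ
  · have hv : ((tau2 n m ℓ p hn hm hp j : Fin (n + m - p)) : ℕ) = (j:ℕ) := by
      simp only [tau2]; rw [if_pos hj]
    rw [hv, if_pos (by omega), if_pos hj]
  · have hv : ((tau2 n m ℓ p hn hm hp j : Fin (n + m - p)) : ℕ) =
        n + m - 2*ℓ - p + ℓ + ((j:ℕ) - (n - ℓ)) := by
      simp only [tau2]; rw [if_neg hj]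
    rw [hv, if_neg (by omega), if_neg (by omega), if_neg hj]
    congr 1
    omega

lemma selL3 (hKN : n + m - 2*ℓ - p + (ℓ + ℓ) = n + m - p)
    (t : Fin (n + m - 2*ℓ - p) → ℝ) (s s' : Fin ℓ → ℝ) :
    (fun j : Fin m => mEq (n + m - 2*ℓ - p) (ℓ + ℓ) (n + m - p) hKN
        (t, mEq ℓ ℓ (ℓ + ℓ) rfl (s, s')) (tau3 n m ℓ p hn hm hp j)) =
      fun j : Fin m => if (j:ℕ) < ℓ then ext s (ℓ - 1 - (j:ℕ))
        else ext t (n - ℓ - p + ((j:ℕ) - ℓ)) := by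
  funext j
  rw [bigX_app]
  by_cases hj : (j:ℕ) < ℓ
  · have hv : ((tau3 n m ℓ p hn hm hp j : Fin (n + m - p)) : ℕ) =
        n + m - 2*ℓ - p + (ℓ - 1 - (j:ℕ)) := by
      simp only [tau3]; rw [if_pos hj]
    rw [hv, if_neg (by omega), if_pos (by omega), if_pos hj]
    congr 1
    omega
  · have hv : ((tau3 n m ℓ p hn hm hp j : Fin (n + m - p)) : ℕ) =
        n - ℓ - p + ((j:ℕ) - ℓ) := by
      simp only [tau3]; rw [if_neg hj]
    rw [hv, if_pos (by omega), if_neg hj]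

lemma selL4 (hKN : n + m - 2*ℓ - p + (ℓ + ℓ) = n + m - p)
    (t : Fin (n + m - 2*ℓ - p) → ℝ) (s s' : Fin ℓ → ℝ) :
    (fun j : Fin m => mEq (n + m - 2*ℓ - p) (ℓ + ℓ) (n + m - p) hKN
        (t, mEq ℓ ℓ (ℓ + ℓ) rfl (s, s')) (tau4 n m ℓ p hn hm hp j)) =
      fun j : Fin m => if (j:ℕ) < ℓ then ext s' (ℓ - 1 - (j:ℕ))
        else ext t (n - ℓ - p + ((j:ℕ) - ℓ)) := by
  funext j
  rw [bigX_app]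
  by_cases hj : (j:ℕ) < ℓ
  · have hv : ((tau4 n m ℓ p hn hm hp j : Fin (n + m - p)) : ℕ) =
        n + m - 2*ℓ - p + ℓ + (ℓ - 1 - (j:ℕ)) := by
      simp only [tau4]; rw [if_pos hj]
    rw [hv, if_neg (by omega), if_neg (by omega), if_pos hj]
    congr 1
    omega
  · have hv : ((tau4 n m ℓ p hn hm hp j : Fin (n + m - p)) : ℕ) =
        n - ℓ - p + ((j:ℕ) - ℓ) := by
      simp only [tau4]; rw [if_neg hj]
    rw [hv, if_pos (by omega), if_neg hj]

lemma selR1 (hKN : 2*ℓ + p + ((n - ℓ - p) + (m - ℓ - p)) = n + m - p)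
    (u : Fin (2*ℓ + p) → ℝ) (v : Fin (n - ℓ - p) → ℝ) (w : Fin (m - ℓ - p) → ℝ) :
    (fun j : Fin n => mEq (2*ℓ + p) ((n - ℓ - p) + (m - ℓ - p)) (n + m - p) hKN
        (u, mEq (n - ℓ - p) (m - ℓ - p) ((n - ℓ - p) + (m - ℓ - p)) rfl (v, w))
        (sig1 n m ℓ p hn hm hp j)) =
      fun j : Fin n => if (j:ℕ) < ℓ + p then ext u (j:ℕ) else ext v ((j:ℕ) - (ℓ + p)) := by
  funext j
  rw [bigX_app]
  by_cases hj : (j:ℕ) < ℓ + p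
  · have hv : ((sig1 n m ℓ p hn hm hp j : Fin (n + m - p)) : ℕ) = (j:ℕ) := by
      simp only [sig1]; rw [if_pos hj]
    rw [hv, if_pos (by omega), if_pos hj]
  · have hv : ((sig1 n m ℓ p hn hm hp j : Fin (n + m - p)) : ℕ) =
        2*ℓ + p + ((j:ℕ) - (ℓ + p)) := by
      simp only [sig1]; rw [if_neg hj]
    rw [hv, if_neg (by omega), if_pos (by omega), if_neg hj]
    congr 1
    omega

lemma selR2 (hKN : 2*ℓ + p + ((n - ℓ - p) + (m - ℓ - p)) = n + m - p)
    (u : Fin (2*ℓ + p) → ℝ) (v : Fin (n - ℓ - p) → ℝ) (w : Fin (m - ℓ - p) → ℝ) :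
    (fun j : Fin n => mEq (2*ℓ + p) ((n - ℓ - p) + (m - ℓ - p)) (n + m - p) hKN
        (u, mEq (n - ℓ - p) (m - ℓ - p) ((n - ℓ - p) + (m - ℓ - p)) rfl (v, w))
        (sig2 n m ℓ p hn hm hp j)) =
      fun j : Fin n => if (j:ℕ) < n - ℓ - p then ext v (n - ℓ - p - 1 - (j:ℕ))
        else ext u (ℓ + ((j:ℕ) - (n - ℓ - p))) := by
  funext j
  rw [bigX_app]
  by_cases hj : (j:ℕ) < n - ℓ - p
  · have hv : ((sig2 n m ℓ p hn hm hp j : Fin (n + m - p)) : ℕ) =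
        2*ℓ + p + (n - ℓ - p - 1 - (j:ℕ)) := by
      simp only [sig2]; rw [if_pos hj]
    rw [hv, if_neg (by omega), if_pos (by omega), if_pos hj]
    congr 1
    omega
  · have hv : ((sig2 n m ℓ p hn hm hp j : Fin (n + m - p)) : ℕ) =
        ℓ + ((j:ℕ) - (n - ℓ - p)) := by
      simp only [sig2]; rw [if_neg hj]
    rw [hv, if_pos (by omega), if_neg hj]

lemma selR3 (hKN : 2*ℓ + p + ((n - ℓ - p) + (m - ℓ - p)) = n + m - p)
    (u : Fin (2*ℓ + p) → ℝ) (v : Fin (n - ℓ - p) → ℝ) (w : Fin (m - ℓ - p) → ℝ) :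
    (fun j : Fin m => mEq (2*ℓ + p) ((n - ℓ - p) + (m - ℓ - p)) (n + m - p) hKN
        (u, mEq (n - ℓ - p) (m - ℓ - p) ((n - ℓ - p) + (m - ℓ - p)) rfl (v, w))
        (sig3 n m ℓ p hn hm hp j)) =
      fun j : Fin m => if (j:ℕ) < ℓ + p then ext u (j:ℕ) else ext w ((j:ℕ) - (ℓ + p)) := by
  funext j
  rw [bigX_app]
  by_cases hj : (j:ℕ) < ℓ + p
  · have hv : ((sig3 n m ℓ p hn hm hp j : Fin (n + m - p)) : ℕ) = (j:ℕ) := by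
      simp only [sig3]; rw [if_pos hj]
    rw [hv, if_pos (by omega), if_pos hj]
  · have hv : ((sig3 n m ℓ p hn hm hp j : Fin (n + m - p)) : ℕ) =
        2*ℓ + p + (n - ℓ - p) + ((j:ℕ) - (ℓ + p)) := by
      simp only [sig3]; rw [if_neg hj]
    rw [hv, if_neg (by omega), if_neg (by omega), if_neg hj]
    congr 1
    omega

lemma selR4 (hKN : 2*ℓ + p + ((n - ℓ - p) + (m - ℓ - p)) = n + m - p)
    (u : Fin (2*ℓ + p) → ℝ) (v : Fin (n - ℓ - p) → ℝ) (w : Fin (m - ℓ - p) → ℝ) :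
    (fun j : Fin m => mEq (2*ℓ + p) ((n - ℓ - p) + (m - ℓ - p)) (n + m - p) hKN
        (u, mEq (n - ℓ - p) (m - ℓ - p) ((n - ℓ - p) + (m - ℓ - p)) rfl (v, w))
        (sig4 n m ℓ p hn hm hp j)) =
      fun j : Fin m => if (j:ℕ) < m - ℓ - p then ext w (m - ℓ - p - 1 - (j:ℕ))
        else ext u (ℓ + ((j:ℕ) - (m - ℓ - p))) := by
  funext j
  rw [bigX_app]
  by_cases hj : (j:ℕ) < m - ℓ - p
  · have hv : ((sig4 n m ℓ p hn hm hp j : Fin (n + m - p)) : ℕ) =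
        2*ℓ + p + (n - ℓ - p) + (m - ℓ - p - 1 - (j:ℕ)) := by
      simp only [sig4]; rw [if_pos hj]
    rw [hv, if_neg (by omega), if_neg (by omega), if_pos hj]
    congr 1
    omega
  · have hv : ((sig4 n m ℓ p hn hm hp j : Fin (n + m - p)) : ℕ) =
        ℓ + ((j:ℕ) - (m - ℓ - p)) := by
      simp only [sig4]; rw [if_neg hj]
    rw [hv, if_pos (by omega), if_neg hj]

lemma permM1 (j : Fin n) :
    sigP hn hm hp (sig1 n m ℓ p hn hm hp j) = tau2 n m ℓ p hn hm hp j.rev := by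
  apply Fin.ext
  simp only [sigP, pfwd, sig1, tau2, Equiv.coe_fn_mk, Fin.val_rev]
  split_ifs <;> omega

lemma permM2 (j : Fin n) :
    sigP hn hm hp (sig2 n m ℓ p hn hm hp j) = tau1 n m ℓ p hn hm hp j := by
  apply Fin.ext
  simp only [sigP, pfwd, sig2, tau1, Equiv.coe_fn_mk]
  split_ifs <;> omega

lemma permM3 (j : Fin m) :
    sigP hn hm hp (sig3 n m ℓ p hn hm hp j) = tau4 n m ℓ p hn hm hp j := by
  apply Fin.ext
  simp only [sigP, pfwd, sig3, tau4, Equiv.coe_fn_mk]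
  split_ifs <;> omega

lemma permM4 (j : Fin m) :
    sigP hn hm hp (sig4 n m ℓ p hn hm hp j.rev) = tau3 n m ℓ p hn hm hp j := by
  apply Fin.ext
  simp only [sigP, pfwd, sig4, tau3, Equiv.coe_fn_mk, Fin.val_rev]
  split_ifs <;> omega

end Main2

/-! ### Integrability of the master integrand, and iterated integration -/

lemma bdd_conj {k : ℕ} {φ : (Fin k → ℝ) → ℂ} (h : BddBddSupp φ) :
    BddBddSupp (fun t => (starRingEnd ℂ) (φ t)) := by
  obtain ⟨⟨C, hC⟩, ⟨R, hR⟩⟩ := h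
  refine ⟨⟨C, fun t => ?_⟩, ⟨R, fun t ht i => ?_⟩⟩
  · simpa using hC t
  · exact hR t (by simpa using ht) i

lemma aesm_conj {k : ℕ} {φ : (Fin k → ℝ) → ℂ} (h : AEStronglyMeasurable φ (pim k)) :
    AEStronglyMeasurable (fun t => (starRingEnd ℂ) (φ t)) (pim k) :=
  Complex.continuous_conj.comp_aestronglyMeasurable h

lemma integrable_4sel {N n1 n2 n3 n4 : ℕ}
    (φ1 : (Fin n1 → ℝ) → ℂ) (φ2 : (Fin n2 → ℝ) → ℂ)
    (φ3 : (Fin n3 → ℝ) → ℂ) (φ4 : (Fin n4 → ℝ) → ℂ)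
    (τ1 : Fin n1 → Fin N) (τ2 : Fin n2 → Fin N) (τ3 : Fin n3 → Fin N) (τ4 : Fin n4 → Fin N)
    (h1 : AEStronglyMeasurable φ1 (pim n1)) (h2 : AEStronglyMeasurable φ2 (pim n2))
    (h3 : AEStronglyMeasurable φ3 (pim n3)) (h4 : AEStronglyMeasurable φ4 (pim n4))
    (hb1 : BddBddSupp φ1) (hb2 : BddBddSupp φ2) (hb3 : BddBddSupp φ3) (hb4 : BddBddSupp φ4)
    (i1 : Function.Injective τ1) (i2 : Function.Injective τ2)
    (i3 : Function.Injective τ3) (i4 : Function.Injective τ4)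
    (cover : ∀ i : Fin N, (∃ j, τ1 j = i) ∨ (∃ j, τ2 j = i) ∨
      (∃ j, τ3 j = i) ∨ (∃ j, τ4 j = i)) :
    Integrable (fun x : Fin N → ℝ =>
      (φ1 (fun j => x (τ1 j)) * φ2 (fun j => x (τ2 j))) *
        (φ3 (fun j => x (τ3 j)) * φ4 (fun j => x (τ4 j)))) (pim N) := by
  classical
  obtain ⟨⟨C1, hC1⟩, ⟨R1, hR1⟩⟩ := hb1
  obtain ⟨⟨C2, hC2⟩, ⟨R2, hR2⟩⟩ := hb2
  obtain ⟨⟨C3, hC3⟩, ⟨R3, hR3⟩⟩ := hb3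
  obtain ⟨⟨C4, hC4⟩, ⟨R4, hR4⟩⟩ := hb4
  set R : ℝ := max (max R1 R2) (max R3 R4) with hRdef
  set C : ℝ := (max C1 0 * max C2 0) * (max C3 0 * max C4 0) with hCdef
  set Box : Set (Fin N → ℝ) := Set.pi Set.univ (fun _ => Set.Icc (-R) R) with hBox
  have hBoxMeas : MeasurableSet Box := MeasurableSet.univ_pi fun _ => measurableSet_Icc
  have hBoxFin : pim N Box < ⊤ := by
    rw [hBox]
    unfold pim
    rw [Measure.pi_pi]
    refine ENNReal.prod_lt_top fun i _ => ?_
    have hle : nu (Set.Icc (-R) R) ≤ volume (Set.Icc (-R) R) := by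
      unfold nu
      rw [Measure.restrict_apply measurableSet_Icc]
      exact measure_mono Set.inter_subset_left
    refine lt_of_le_of_lt hle ?_
    rw [Real.volume_Icc]
    exact ENNReal.ofReal_lt_top
  have hG : Integrable (Box.indicator (fun _ => C)) (pim N) := by
    rw [integrable_indicator_iff hBoxMeas]
    exact integrableOn_const hBoxFin.ne
  refine Integrable.mono' hG
    (((sel_aesm h1 i1).mul (sel_aesm h2 i2)).mul ((sel_aesm h3 i3).mul (sel_aesm h4 i4)))
    (Filter.Eventually.of_forall fun x => ?_)
  by_cases hx : x ∈ Box
  · rw [Set.indicator_of_mem hx]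
    rw [norm_mul, norm_mul, norm_mul, hCdef]
    have e1 : ‖φ1 (fun j => x (τ1 j))‖ ≤ max C1 0 := le_trans (hC1 _) (le_max_left _ _)
    have e2 : ‖φ2 (fun j => x (τ2 j))‖ ≤ max C2 0 := le_trans (hC2 _) (le_max_left _ _)
    have e3 : ‖φ3 (fun j => x (τ3 j))‖ ≤ max C3 0 := le_trans (hC3 _) (le_max_left _ _)
    have e4 : ‖φ4 (fun j => x (τ4 j))‖ ≤ max C4 0 := le_trans (hC4 _) (le_max_left _ _)
    have nn : (0:ℝ) ≤ max C2 0 := le_max_right _ _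
    have nn4 : (0:ℝ) ≤ max C4 0 := le_max_right _ _
    exact mul_le_mul (mul_le_mul e1 e2 (norm_nonneg _) (le_trans (norm_nonneg _) e1))
      (mul_le_mul e3 e4 (norm_nonneg _) (le_trans (norm_nonneg _) e3))
      (mul_nonneg (norm_nonneg _) (norm_nonneg _))
      (mul_nonneg (le_trans (norm_nonneg _) e1) nn)
  · rw [Set.indicator_of_notMem hx]
    have hex : ∃ i : Fin N, R < |x i| := by
      by_contra hcon
      push_neg at hcon
      exact hx fun i _ => Set.mem_Icc.2 (abs_le.1 (hcon i))
    obtain ⟨i, hi⟩ := hex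
    have hR1' : R1 ≤ R := le_trans (le_max_left _ _) (le_max_left _ _)
    have hR2' : R2 ≤ R := le_trans (le_max_right _ _) (le_max_left _ _)
    have hR3' : R3 ≤ R := le_trans (le_max_left _ _) (le_max_right _ _)
    have hR4' : R4 ≤ R := le_trans (le_max_right _ _) (le_max_right _ _)
    rcases cover i with ⟨j, hj⟩ | ⟨j, hj⟩ | ⟨j, hj⟩ | ⟨j, hj⟩
    · have hz : φ1 (fun j => x (τ1 j)) = 0 := by
        by_contra hnz
        have := hR1 _ hnz j
        rw [hj] at this
        exact absurd (le_trans this hR1') (not_le.2 hi)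
      simp [hz]
    · have hz : φ2 (fun j => x (τ2 j)) = 0 := by
        by_contra hnz
        have := hR2 _ hnz j
        rw [hj] at this
        exact absurd (le_trans this hR2') (not_le.2 hi)
      simp [hz]
    · have hz : φ3 (fun j => x (τ3 j)) = 0 := by
        by_contra hnz
        have := hR3 _ hnz j
        rw [hj] at this
        exact absurd (le_trans this hR3') (not_le.2 hi)
      simp [hz]
    · have hz : φ4 (fun j => x (τ4 j)) = 0 := by
        by_contra hnz
        have := hR4 _ hnz j
        rw [hj] at this
        exact absurd (le_trans this hR4') (not_le.2 hi)
      simp [hz]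

lemma triple_to_big {K a b N : ℕ} (hKN : K + (a + b) = N) (Φ : (Fin N → ℝ) → ℂ)
    (hInt : Integrable Φ (pim N)) :
    (∫ t, (∫ s, (∫ s',
        Φ (mEq K (a + b) N hKN (t, mEq a b (a + b) rfl (s, s'))) ∂(pim b)) ∂(pim a)) ∂(pim K)) =
      ∫ x, Φ x ∂(pim N) := by
  have mpi := mEq_mp a b (a + b) rfl
  have mpo := mEq_mp K (a + b) N hKN
  let e : ((Fin K → ℝ) × ((Fin a → ℝ) × (Fin b → ℝ))) ≃ᵐ (Fin N → ℝ) :=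
    (MeasurableEquiv.prodCongr (MeasurableEquiv.refl (Fin K → ℝ)) (mEq a b (a + b) rfl)).trans
      (mEq K (a + b) N hKN)
  have mpe : MeasurePreserving e ((pim K).prod ((pim a).prod (pim b))) (pim N) :=
    mpo.comp ((MeasurePreserving.id (pim K)).prod mpi)
  have hIntc : Integrable (Φ ∘ e) ((pim K).prod ((pim a).prod (pim b))) :=
    (mpe.integrable_comp_emb e.measurableEmbedding).2 hInt
  rw [← mpe.integral_comp e.measurableEmbedding Φ]
  have hIntc' : Integrable (fun z => Φ (e z)) ((pim K).prod ((pim a).prod (pim b))) := hIntc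
  rw [integral_prod (fun z => Φ (e z)) hIntc']
  apply integral_congr_ae
  filter_upwards [hIntc'.prod_right_ae] with t ht
  rw [integral_prod (fun y => Φ (e (t, y))) ht]
  rfl

lemma mirror_conj {k : ℕ} {φ : (Fin k → ℝ) → ℂ} (hms : MirrorSymmetric φ) :
    ∀ᵐ t ∂(pim k), (starRingEnd ℂ) (φ t) = φ (fun i => t i.rev) := by
  unfold MirrorSymmetric at hms
  rw [restrict_orth] at hms
  filter_upwards [hms] with t ht
  rw [ht, Complex.conj_conj]


/-- the squared `L²(ℝ₊^{n+m-2ℓ-p})`-norm of the contraction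
`f ⋆_{ℓ+p}^{ℓ} g` equals the `L²(ℝ₊^{2ℓ+p})` inner product of `f ⋆_{n-ℓ}^{n-ℓ-p} f` and
`g ⋆_{m-ℓ}^{m-ℓ-p} g`. -/
theorem sq_norm_contraction_eq_inner
    (n m : ℕ) (hn : 1 ≤ n) (hm : 1 ≤ m)
    (f : (Fin n → ℝ) → ℂ) (g : (Fin m → ℝ) → ℂ)
    (hfmem : MemLp f 2 (volume.restrict (orth (Fin n))))
    (hgmem : MemLp g 2 (volume.restrict (orth (Fin m))))
    (hfms : MirrorSymmetric f) (hgms : MirrorSymmetric g)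
    (hfb : BddBddSupp f) (hgb : BddBddSupp g)
    (p ℓ : ℕ) (hp : p ≤ 1) (h1 : 1 ≤ ℓ + p) (h2 : ℓ + p ≤ min n m) (h3 : ℓ ≤ min n m - p) :
    ((∫ t in orth (Fin (n + m - 2 * ℓ - p)), ‖starpC n m ℓ p f g t‖ ^ 2 : ℝ) : ℂ) =
      ∫ t in orth (Fin (2 * ℓ + p)),
        starpC n n (n - ℓ - p) p f f (fun j => ext t (j : ℕ)) *
          (starRingEnd ℂ) (starpC m m (m - ℓ - p) p g g (fun j => ext t (j : ℕ))) := by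
  classical
  have hn : ℓ + p ≤ n := le_trans h2 (min_le_left _ _)
  have hm : ℓ + p ≤ m := le_trans h2 (min_le_right _ _)
  have hKN : n + m - 2*ℓ - p + (ℓ + ℓ) = n + m - p := by omega
  have hKN' : 2*ℓ + p + ((n - ℓ - p) + (m - ℓ - p)) = n + m - p := by omega
  have hfaesm : AEStronglyMeasurable f (pim n) := by
    rw [← restrict_orth]; exact hfmem.aestronglyMeasurable
  have hgaesm : AEStronglyMeasurable g (pim m) := by
    rw [← restrict_orth]; exact hgmem.aestronglyMeasurable
  set Lam : (Fin (n + m - p) → ℝ) → ℂ := fun x =>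
    (f (fun j => x (tau1 n m ℓ p hn hm hp j)) * g (fun j => x (tau3 n m ℓ p hn hm hp j))) *
      ((starRingEnd ℂ) (f (fun j => x (tau2 n m ℓ p hn hm hp j))) *
        (starRingEnd ℂ) (g (fun j => x (tau4 n m ℓ p hn hm hp j)))) with hLam
  set Gam : (Fin (n + m - p) → ℝ) → ℂ := fun x =>
    (f (fun j => x (sig1 n m ℓ p hn hm hp j)) * f (fun j => x (sig2 n m ℓ p hn hm hp j))) *
      ((starRingEnd ℂ) (g (fun j => x (sig3 n m ℓ p hn hm hp j))) *
        (starRingEnd ℂ) (g (fun j => x (sig4 n m ℓ p hn hm hp j)))) with hGam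
  set LamP : (Fin (n + m - p) → ℝ) → ℂ := fun x =>
    (f (fun j => x (tau1 n m ℓ p hn hm hp j)) * g (fun j => x (tau3 n m ℓ p hn hm hp j))) *
      (f (fun i => x (tau2 n m ℓ p hn hm hp i.rev)) *
        (starRingEnd ℂ) (g (fun j => x (tau4 n m ℓ p hn hm hp j)))) with hLamP
  set GamP : (Fin (n + m - p) → ℝ) → ℂ := fun x =>
    (f (fun j => x (sig1 n m ℓ p hn hm hp j)) * f (fun j => x (sig2 n m ℓ p hn hm hp j))) *
      ((starRingEnd ℂ) (g (fun j => x (sig3 n m ℓ p hn hm hp j))) *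
        g (fun i => x (sig4 n m ℓ p hn hm hp i.rev))) with hGamP
  have hIntLam : Integrable Lam (pim (n + m - p)) :=
    integrable_4sel f g (fun t => (starRingEnd ℂ) (f t)) (fun t => (starRingEnd ℂ) (g t))
      (tau1 n m ℓ p hn hm hp) (tau3 n m ℓ p hn hm hp)
      (tau2 n m ℓ p hn hm hp) (tau4 n m ℓ p hn hm hp)
      hfaesm hgaesm (aesm_conj hfaesm) (aesm_conj hgaesm)
      hfb hgb (bdd_conj hfb) (bdd_conj hgb)
      (tau1_inj hn hm hp) (tau3_inj hn hm hp) (tau2_inj hn hm hp) (tau4_inj hn hm hp)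
      (tau_cover hn hm hp)
  have hIntGam : Integrable Gam (pim (n + m - p)) :=
    integrable_4sel f f (fun t => (starRingEnd ℂ) (g t)) (fun t => (starRingEnd ℂ) (g t))
      (sig1 n m ℓ p hn hm hp) (sig2 n m ℓ p hn hm hp)
      (sig3 n m ℓ p hn hm hp) (sig4 n m ℓ p hn hm hp)
      hfaesm hfaesm (aesm_conj hgaesm) (aesm_conj hgaesm)
      hfb hfb (bdd_conj hgb) (bdd_conj hgb)
      (sig1_inj hn hm hp) (sig2_inj hn hm hp) (sig3_inj hn hm hp) (sig4_inj hn hm hp)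
      (sig_cover hn hm hp)
  have hLHS : ((∫ t in orth (Fin (n + m - 2 * ℓ - p)), ‖starpC n m ℓ p f g t‖ ^ 2 : ℝ) : ℂ) =
      ∫ x, Lam x ∂(pim (n + m - p)) := by
    rw [restrict_orth]
    rw [show ((∫ t, ‖starpC n m ℓ p f g t‖ ^ 2 ∂(pim (n + m - 2 * ℓ - p)) : ℝ) : ℂ) =
      ∫ t, ((‖starpC n m ℓ p f g t‖ ^ 2 : ℝ) : ℂ) ∂(pim (n + m - 2 * ℓ - p)) from
      (integral_ofReal (𝕜 := ℂ)).symm]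
    rw [← triple_to_big hKN Lam hIntLam]
    refine integral_congr_ae (Filter.Eventually.of_forall fun t => ?_)
    beta_reduce
    have hz : ((‖starpC n m ℓ p f g t‖ ^ 2 : ℝ) : ℂ) =
        starpC n m ℓ p f g t * (starRingEnd ℂ) (starpC n m ℓ p f g t) := by
      rw [Complex.mul_conj]
      norm_cast
      rw [Complex.normSq_eq_norm_sq]
    rw [hz, starpC_expand n m ℓ p hp hn hm f g t, restrict_orth, ← integral_conj,
      ← integral_mul_const]
    refine integral_congr_ae (Filter.Eventually.of_forall fun s => ?_)
    beta_reduce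
    rw [← integral_const_mul]
    refine integral_congr_ae (Filter.Eventually.of_forall fun s' => ?_)
    beta_reduce
    rw [hLam]
    simp only []
    rw [selL1 hn hm hp hKN t s s', selL2 hn hm hp hKN t s s', selL3 hn hm hp hKN t s s',
      selL4 hn hm hp hKN t s s', map_mul]
  have hRHS : (∫ t in orth (Fin (2 * ℓ + p)),
      starpC n n (n - ℓ - p) p f f (fun j => ext t (j : ℕ)) *
        (starRingEnd ℂ) (starpC m m (m - ℓ - p) p g g (fun j => ext t (j : ℕ)))) =
      ∫ x, Gam x ∂(pim (n + m - p)) := by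
    rw [restrict_orth, ← triple_to_big hKN' Gam hIntGam]
    refine integral_congr_ae (Filter.Eventually.of_forall fun t => ?_)
    beta_reduce
    rw [starpC_expand n n (n - ℓ - p) p hp (by omega) (by omega) f f,
      starpC_expand m m (m - ℓ - p) p hp (by omega) (by omega) g g,
      ext_extFun (show n + n - 2*(n - ℓ - p) - p = 2*ℓ + p by omega) t,
      ext_extFun (show m + m - 2*(m - ℓ - p) - p = 2*ℓ + p by omega) t,
      show n - (n - ℓ - p) = ℓ + p by omega, show m - (m - ℓ - p) = ℓ + p by omega,
      show ℓ + p - p = ℓ by omega,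
      restrict_orth, restrict_orth, ← integral_conj, ← integral_mul_const]
    refine integral_congr_ae (Filter.Eventually.of_forall fun v => ?_)
    beta_reduce
    rw [← integral_const_mul]
    refine integral_congr_ae (Filter.Eventually.of_forall fun w => ?_)
    beta_reduce
    rw [hGam]
    simp only []
    rw [selR1 hn hm hp hKN' t v w, selR2 hn hm hp hKN' t v w, selR3 hn hm hp hKN' t v w,
      selR4 hn hm hp hKN' t v w, map_mul]
  have hLamLamP : (∫ x, Lam x ∂(pim (n + m - p))) = ∫ x, LamP x ∂(pim (n + m - p)) := by
    refine integral_congr_ae ?_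
    filter_upwards [sel_ae (mirror_conj hfms) (tau2_inj hn hm hp)] with x hx
    rw [hLam, hLamP]
    simp only []
    rw [hx]
  have hGamGamP : (∫ x, Gam x ∂(pim (n + m - p))) = ∫ x, GamP x ∂(pim (n + m - p)) := by
    refine integral_congr_ae ?_
    filter_upwards [sel_ae (mirror_conj hgms) (sig4_inj hn hm hp)] with x hx
    rw [hGam, hGamP]
    simp only []
    rw [hx]
  have hPerm : (∫ x, GamP x ∂(pim (n + m - p))) = ∫ x, LamP x ∂(pim (n + m - p)) := by
    rw [← (pEq_mp (n + m - p) (sigP hn hm hp).symm).integral_comp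
      (pEq (n + m - p) (sigP hn hm hp).symm).measurableEmbedding GamP]
    refine integral_congr_ae (Filter.Eventually.of_forall fun x => ?_)
    beta_reduce
    have hy : pEq (n + m - p) (sigP hn hm hp).symm x = fun i => x (sigP hn hm hp i) := by
      funext j
      rw [pEq_apply]
      simp
    rw [hy, hGamP, hLamP]
    simp only []
    rw [show (fun j => x (sigP hn hm hp (sig1 n m ℓ p hn hm hp j))) =
        (fun j => x (tau2 n m ℓ p hn hm hp j.rev)) from funext fun j => by rw [permM1],
      show (fun j => x (sigP hn hm hp (sig2 n m ℓ p hn hm hp j))) =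
        (fun j => x (tau1 n m ℓ p hn hm hp j)) from funext fun j => by rw [permM2],
      show (fun j => x (sigP hn hm hp (sig3 n m ℓ p hn hm hp j))) =
        (fun j => x (tau4 n m ℓ p hn hm hp j)) from funext fun j => by rw [permM3],
      show (fun i => x (sigP hn hm hp (sig4 n m ℓ p hn hm hp i.rev))) =
        (fun i => x (tau3 n m ℓ p hn hm hp i)) from funext fun i => by rw [permM4]]
    ring
  rw [hLHS, hRHS, hLamLamP, hGamGamP, hPerm]
end
end
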